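/- arXiv:2407.15721 — 8 statements merged into one kernel-verified Lean document; each statement's English description precedes it below -/
import Mathlib

section
/- Let Γ_f = {0,…,n_f−1} and Γ_g = {0,…,n_g−1} be finite alphabets, f : Γ_f → Γ_f⁺ and g : Γ_g → Γ_g⁺ morphisms such that f(0) and g(0) both start with the letter 0 and have length greater than 1, and let τ : Γ_f → Σ and ρ : Γ_g → Σ be codings into a common alphabet Σ. Suppose that for some n > 0 there are nonempty words u_0,…,u_{n−1} over Γ_f, nonempty words v_0,…,v_{n−1} over Γ_g, and words w_0,…,w_{n−1} over {0,1,…,n−1}, written w_i = w_{i,0} w_{i,1} ⋯ w_{i,k_i−1} with k_i = |w_i|, such that for every i = 0,…,n−1: (a) τ(u_i) = ρ(v_i); (b) f(u_i) = u_{w_{i,0}} u_{w_{i,1}} ⋯ u_{w_{i,k_i−1}}; and (c) g(v_i) = v_{w_{i,0}} v_{w_{i,1}} ⋯ v_{w_{i,k_i−1}}. Suppose moreover that both u_0 and v_0 start with the letter 0. Then τ(f^∞(0)) = ρ(g^∞(0)). -/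
def applyW {Γ : Type*} (f : Γ → List Γ) (w : List Γ) : List Γ := w.flatMap f

def applyS {Γ : Type*} (f : Γ → List Γ) (σ : ℕ → Γ) (n : ℕ) : Γ :=
  ((List.range (n + 1)).flatMap fun i => f (σ i)).getD n (σ 0)

def applyC {Γ S : Type*} (τ : Γ → S) (σ : ℕ → Γ) : ℕ → S := fun n => τ (σ n)

def fixpt {Γ : Type*} (f : Γ → List Γ) (a : Γ) (n : ℕ) : Γ :=
  ((applyW f)^[n + 1] [a]).getD n a

section helpers
variable {Γ ι S : Type*}

lemma applyW_append (f : Γ → List Γ) (a b : List Γ) :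
    applyW f (a ++ b) = applyW f a ++ applyW f b := by
  simp [applyW]

lemma applyW_mono (f : Γ → List Γ) {a b : List Γ} (h : a <+: b) :
    applyW f a <+: applyW f b := by
  obtain ⟨c, rfl⟩ := h
  exact ⟨applyW f c, (applyW_append f a c).symm⟩

lemma applyW_iter_mono (f : Γ → List Γ) {a b : List Γ} (h : a <+: b) (k : ℕ) :
    (applyW f)^[k] a <+: (applyW f)^[k] b := by
  induction k with
  | zero => simpa using h
  | succ k ih =>
      rw [Function.iterate_succ_apply', Function.iterate_succ_apply']
      exact applyW_mono f ih

lemma applyW_length_le (f : Γ → List Γ) (hf : ∀ a, f a ≠ []) (l : List Γ) :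
    l.length ≤ (applyW f l).length := by
  induction l with
  | nil => simp [applyW]
  | cons a t ih =>
      have h1 : 1 ≤ (f a).length := List.length_pos_iff.mpr (hf a)
      simp only [applyW, List.flatMap_cons, List.length_append, List.length_cons]
      have : applyW f t = t.flatMap f := rfl
      rw [← this]
      omega

lemma head_exists {l : List Γ} {z : Γ} (h : l.head? = some z) : ∃ t, l = z :: t := by
  cases l with
  | nil => simp at h
  | cons a t => simp at h; exact ⟨t, by rw [h]⟩

lemma grow (f : Γ → List Γ) (hf : ∀ a, f a ≠ []) {z : Γ}
    (hf0 : (f z).head? = some z) (hlen : 1 < (f z).length) (k : ℕ) :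
    ((applyW f)^[k] [z]).head? = some z ∧ k + 1 ≤ ((applyW f)^[k] [z]).length := by
  induction k with
  | zero => simp
  | succ k ih =>
      obtain ⟨ih1, ih2⟩ := ih
      obtain ⟨t, ht⟩ := head_exists ih1
      obtain ⟨s, hs⟩ := head_exists hf0
      rw [Function.iterate_succ_apply', ht]
      have hexp : applyW f (z :: t) = f z ++ applyW f t := by
        simp [applyW]
      constructor
      · rw [hexp, hs]; rfl
      · have h1 : t.length ≤ (applyW f t).length := applyW_length_le f hf t
        have h2 : k + 1 ≤ t.length + 1 := by
          have := ih2; rw [ht] at this; simpa using this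
        rw [hexp, List.length_append, hs]
        simp only [List.length_cons]
        have : 1 ≤ s.length := by
          rw [hs] at hlen; simp at hlen; omega
        omega

lemma base_prefix (f : Γ → List Γ) {z : Γ} (hf0 : (f z).head? = some z) :
    [z] <+: applyW f [z] := by
  obtain ⟨s, hs⟩ := head_exists hf0
  have : applyW f [z] = f z := by simp [applyW]
  rw [this, hs]
  exact ⟨s, rfl⟩

lemma iter_chain (f : Γ → List Γ) {z : Γ} (hf0 : (f z).head? = some z) {k l : ℕ}
    (hkl : k ≤ l) : (applyW f)^[k] [z] <+: (applyW f)^[l] [z] := by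
  induction l, hkl using Nat.le_induction with
  | base => rfl
  | succ l hl ih =>
      refine ih.trans ?_
      rw [Function.iterate_succ_apply]
      exact applyW_iter_mono f (base_prefix f hf0) l

lemma fixpt_eq (f : Γ → List Γ) (hf : ∀ a, f a ≠ []) {z : Γ}
    (hf0 : (f z).head? = some z) (hlen : 1 < (f z).length) (m k : ℕ)
    (hm : m < ((applyW f)^[k] [z]).length) :
    fixpt f z m = ((applyW f)^[k] [z])[m] := by
  set K := max k (m + 1) with hK
  have h1 : (applyW f)^[m+1] [z] <+: (applyW f)^[K] [z] :=
    iter_chain f hf0 (le_max_right _ _)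
  have h2 : (applyW f)^[k] [z] <+: (applyW f)^[K] [z] :=
    iter_chain f hf0 (le_max_left _ _)
  have hm1 : m < ((applyW f)^[m+1] [z]).length := by
    have := (grow f hf hf0 hlen (m+1)).2; omega
  rw [fixpt, List.getD_eq_getElem _ _ hm1]
  rw [h1.getElem hm1, h2.getElem hm]

lemma comm_flat (f : Γ → List Γ) (w : ι → List ι) (u : ι → List Γ)
    (hfu : ∀ i, applyW f (u i) = (w i).flatMap u) (W : List ι) :
    applyW f (W.flatMap u) = (applyW w W).flatMap u := by
  induction W with
  | nil => simp [applyW]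
  | cons a t ih =>
      have : applyW w (a :: t) = w a ++ applyW w t := by simp [applyW]
      rw [List.flatMap_cons, applyW_append, ih, hfu, this, List.flatMap_append]

lemma comm_iter (f : Γ → List Γ) (w : ι → List ι) (u : ι → List Γ)
    (hfu : ∀ i, applyW f (u i) = (w i).flatMap u) (W : List ι) (k : ℕ) :
    (applyW f)^[k] (W.flatMap u) = ((applyW w)^[k] W).flatMap u := by
  induction k with
  | zero => rfl
  | succ k ih =>
      rw [Function.iterate_succ_apply', Function.iterate_succ_apply', ih,
        comm_flat f w u hfu]

lemma code_flat {Δ : Type*} (τ : Γ → S) (ρ : Δ → S) (u : ι → List Γ) (v : ι → List Δ)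
    (hcode : ∀ i, (u i).map τ = (v i).map ρ) (W : List ι) :
    (W.flatMap u).map τ = (W.flatMap v).map ρ := by
  induction W with
  | nil => simp
  | cons a t ih => simp [List.flatMap_cons, ih, hcode]

end helpers

/-- Theorem 2 (main theorem): the simultaneous-induction criterion implies
`τ(f^∞(0)) = ρ(g^∞(0))`. -/
theorem stmt_0 {S : Type*} (nf ng : ℕ) [NeZero nf] [NeZero ng]
    (f : Fin nf → List (Fin nf)) (g : Fin ng → List (Fin ng))
    (hf : ∀ a, f a ≠ []) (hg : ∀ a, g a ≠ [])
    (hf0 : (f 0).head? = some 0) (hf0len : 1 < (f 0).length)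
    (hg0 : (g 0).head? = some 0) (hg0len : 1 < (g 0).length)
    (τ : Fin nf → S) (ρ : Fin ng → S)
    (n : ℕ) [NeZero n]
    (u : Fin n → List (Fin nf)) (v : Fin n → List (Fin ng)) (w : Fin n → List (Fin n))
    (hu : ∀ i, u i ≠ []) (hv : ∀ i, v i ≠ [])
    (hcode : ∀ i, (u i).map τ = (v i).map ρ)
    (hfu : ∀ i, applyW f (u i) = (w i).flatMap u)
    (hgv : ∀ i, applyW g (v i) = (w i).flatMap v)
    (hu0 : (u 0).head? = some 0) (hv0 : (v 0).head? = some 0) :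
    applyC τ (fixpt f 0) = applyC ρ (fixpt g 0) := by
  funext m
  set W : List (Fin n) := (applyW w)^[m+1] [(0 : Fin n)] with hW
  set F : List (Fin nf) := (applyW f)^[m+1] [(0 : Fin nf)] with hF
  set G : List (Fin ng) := (applyW g)^[m+1] [(0 : Fin ng)] with hG
  set U : List (Fin nf) := W.flatMap u with hU
  set V : List (Fin ng) := W.flatMap v with hV
  have hu0' : [(0 : Fin nf)] <+: u 0 := by
    obtain ⟨t, ht⟩ := head_exists hu0; rw [ht]; exact ⟨t, rfl⟩
  have hv0' : [(0 : Fin ng)] <+: v 0 := by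
    obtain ⟨t, ht⟩ := head_exists hv0; rw [ht]; exact ⟨t, rfl⟩
  have hUeq : (applyW f)^[m+1] (u 0) = U := by
    have h0 : ([(0 : Fin n)].flatMap u) = u 0 := by simp
    rw [hU, hW, ← comm_iter f w u hfu, h0]
  have hVeq : (applyW g)^[m+1] (v 0) = V := by
    have h0 : ([(0 : Fin n)].flatMap v) = v 0 := by simp
    rw [hV, hW, ← comm_iter g w v hgv, h0]
  have hFU : F <+: U := by rw [← hUeq]; exact applyW_iter_mono f hu0' (m+1)
  have hGV : G <+: V := by rw [← hVeq]; exact applyW_iter_mono g hv0' (m+1)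
  have hcodeUV : U.map τ = V.map ρ := code_flat τ ρ u v hcode W
  have hFlen : m < F.length := by
    have := (grow f hf hf0 hf0len (m+1)).2; rw [← hF] at this; omega
  have hGlen : m < G.length := by
    have := (grow g hg hg0 hg0len (m+1)).2; rw [← hG] at this; omega
  have hUlen : m < U.length := lt_of_lt_of_le hFlen hFU.length_le
  have hVlen : m < V.length := by
    have := congrArg List.length hcodeUV
    simp only [List.length_map] at this
    omega
  show τ (fixpt f 0 m) = ρ (fixpt g 0 m)
  rw [fixpt_eq f hf hf0 hf0len m (m+1) hFlen, fixpt_eq g hg hg0 hg0len m (m+1) hGlen]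
  show τ (F[m]'hFlen) = ρ (G[m]'hGlen)
  rw [hFU.getElem hFlen, hGV.getElem hGlen]
  calc τ (U[m]'hUlen) = (U.map τ)[m]'(by simpa using hUlen) :=
        (List.getElem_map τ).symm
    _ = (V.map ρ)[m]'(by simpa using hVlen) := by simp only [hcodeUV]
    _ = ρ (V[m]'hVlen) := List.getElem_map ρ
end

section
/- Let Γ_f = {0,…,n_f−1} and Γ_g = {0,…,n_g−1} be finite alphabets, f : Γ_f → Γ_f⁺ and g : Γ_g → Γ_g⁺ morphisms such that f(0) and g(0) both start with the letter 0 and have length greater than 1, let τ : Γ_f → Σ and ρ : Γ_g → Σ be codings, and assume every letter of Γ_g occurs in g^∞(0). For i = 0,1,…,n_g−1 let w_i be the prefix of g^∞(0) in front of the first occurrence of i in g^∞(0) (so g^∞(0)(|w_i|) = i and i does not occur in w_i), and let u_i be the factor of f^∞(0) occupying positions |g(w_i)| up to (but excluding) |g(w_i i)|, i.e. u_i = f^∞(0)_{|g(w_i)|, |g(w_i i)|}. Assume that for every i = 0,1,…,n_g−1 one has τ(u_i) = ρ(g(i)), and f(u_i) = u_{a_0} u_{a_1} ⋯ u_{a_{k−1}}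 where g(i) = a_0 a_1 ⋯ a_{k−1}. Then τ(f^∞(0)) = ρ(g^∞(0)). -/
namespace Stmt1Aux

variable {Γ : Type*}

theorem applyW_append (f : Γ → List Γ) (v w : List Γ) :
    applyW f (v ++ w) = applyW f v ++ applyW f w := by simp [applyW]

theorem applyW_prefix (f : Γ → List Γ) {v w : List Γ} (h : v <+: w) :
    applyW f v <+: applyW f w := by
  obtain ⟨t, rfl⟩ := h
  exact ⟨applyW f t, (applyW_append f v t).symm⟩

theorem flatMap_prefix {α β : Type*} (f : α → List β) {v w : List α} (h : v <+: w) :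
    v.flatMap f <+: w.flatMap f := by
  obtain ⟨t, rfl⟩ := h
  exact ⟨t.flatMap f, List.flatMap_append.symm⟩

theorem applyW_iterate_prefix (f : Γ → List Γ) {v w : List Γ} (h : v <+: w) (n : ℕ) :
    (applyW f)^[n] v <+: (applyW f)^[n] w := by
  induction n generalizing v w with
  | zero => exact h
  | succ n ih =>
      rw [Function.iterate_succ_apply, Function.iterate_succ_apply]
      exact ih (applyW_prefix f h)

theorem length_le_applyW (f : Γ → List Γ) (hf : ∀ a, f a ≠ []) (w : List Γ) :
    w.length ≤ (applyW f w).length := by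
  induction w with
  | nil => simp [applyW]
  | cons a t ih =>
      have h1 : 1 ≤ (f a).length := List.length_pos_iff.mpr (hf a)
      simp only [applyW, List.flatMap_cons, List.length_append, List.length_cons]
      simp only [applyW] at ih
      omega

/-- `l` is a (finite) prefix of the infinite sequence `σ`. -/
def IsPrefS (σ : ℕ → Γ) (l : List Γ) : Prop := ∀ j (h : j < l.length), l[j] = σ j

theorem isPrefS_of_prefix {σ : ℕ → Γ} {l l' : List Γ} (h : l <+: l') (h' : IsPrefS σ l') :
    IsPrefS σ l := fun j hj => (h.getElem hj).trans (h' j (hj.trans_le h.length_le))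

theorem prefix_of_isPrefS {σ : ℕ → Γ} {l l' : List Γ} (h : IsPrefS σ l) (h' : IsPrefS σ l')
    (hl : l.length ≤ l'.length) : l <+: l' := by
  rw [List.prefix_iff_eq_take]
  apply List.ext_getElem (by simp [Nat.min_eq_left hl])
  intro j h1 h2
  rw [List.getElem_take, h j h1, h' j (lt_of_lt_of_le h1 hl)]

theorem eq_of_isPrefS {σ : ℕ → Γ} {l l' : List Γ} (h : IsPrefS σ l) (h' : IsPrefS σ l')
    (hl : l.length = l'.length) : l = l' := by
  apply List.ext_getElem hl
  intro j h1 h2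
  rw [h j h1, h' j h2]

theorem isPrefS_range_map (σ : ℕ → Γ) (K : ℕ) : IsPrefS σ ((List.range K).map σ) := by
  intro j hj
  simp at hj ⊢

section fix

variable (f : Γ → List Γ) (a : Γ)

theorem singleton_prefix_applyW (hf0 : (f a).head? = some a) : [a] <+: applyW f [a] := by
  have hfa : applyW f [a] = f a := by simp [applyW]
  rw [hfa]
  cases h : f a with
  | nil => simp [h] at hf0
  | cons b t =>
      rw [h] at hf0
      simp only [List.head?_cons, Option.some.injEq] at hf0
      subst hf0
      exact ⟨t, rfl⟩

theorem single_prefix_iter (hf0 : (f a).head? = some a) (n : ℕ) :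
    [a] <+: (applyW f)^[n] [a] := by
  induction n with
  | zero => simp
  | succ n ih =>
      calc [a] <+: (applyW f)^[n] [a] := ih
        _ <+: (applyW f)^[n+1] [a] := by
            rw [Function.iterate_succ_apply]
            exact applyW_iterate_prefix f (singleton_prefix_applyW f a hf0) n

theorem iter_chain (hf0 : (f a).head? = some a) {m m' : ℕ} (h : m ≤ m') :
    (applyW f)^[m] [a] <+: (applyW f)^[m'] [a] := by
  obtain ⟨k, rfl⟩ := Nat.exists_eq_add_of_le h
  rw [Function.iterate_add_apply]
  exact applyW_iterate_prefix f (single_prefix_iter f a hf0 k) m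

theorem iter_length (hf : ∀ b, f b ≠ []) (hf0 : (f a).head? = some a)
    (hflen : 1 < (f a).length) (n : ℕ) : n + 1 ≤ ((applyW f)^[n] [a]).length := by
  induction n with
  | zero => simp
  | succ n ih =>
      obtain ⟨t, ht⟩ := single_prefix_iter f a hf0 n
      rw [Function.iterate_succ_apply', ← ht]
      have h2 := length_le_applyW f hf t
      have h3 : applyW f ([a] ++ t) = f a ++ applyW f t := by simp [applyW]
      rw [h3]
      have hl : ([a] ++ t).length = ((applyW f)^[n] [a]).length := by rw [ht]
      simp only [List.length_append, List.length_cons, List.length_nil] at hl ⊢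
      omega

theorem isPrefS_iter (hf : ∀ b, f b ≠ []) (hf0 : (f a).head? = some a)
    (hflen : 1 < (f a).length) (n : ℕ) : IsPrefS (fixpt f a) ((applyW f)^[n] [a]) := by
  intro j hj
  have hj'' := iter_length f a hf hf0 hflen (j+1)
  have hj' : j < ((applyW f)^[j+1] [a]).length := by omega
  show _ = ((applyW f)^[j + 1] [a]).getD j a
  rw [List.getD_eq_getElem _ _ hj']
  rcases le_total n (j+1) with h | h
  · exact (iter_chain f a hf0 h).getElem hj
  · exact ((iter_chain f a hf0 h).getElem hj').symm

theorem isPrefS_applyW (hf : ∀ b, f b ≠ []) (hf0 : (f a).head? = some a)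
    (hflen : 1 < (f a).length) {l : List Γ} (h : IsPrefS (fixpt f a) l) :
    IsPrefS (fixpt f a) (applyW f l) := by
  have hl := iter_length f a hf hf0 hflen l.length
  have h1 : l <+: (applyW f)^[l.length] [a] :=
    prefix_of_isPrefS h (isPrefS_iter f a hf hf0 hflen l.length) (by omega)
  have h2 : applyW f l <+: (applyW f)^[l.length + 1] [a] := by
    rw [Function.iterate_succ_apply']
    exact applyW_prefix f h1
  exact isPrefS_of_prefix h2 (isPrefS_iter f a hf hf0 hflen (l.length + 1))

theorem fixpt_zero (hf0 : (f a).head? = some a) : fixpt f a 0 = a := by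
  show ((applyW f)^[1] [a]).getD 0 a = a
  have hfa : (applyW f)^[1] [a] = f a := by simp [applyW]
  rw [hfa]
  cases h : f a with
  | nil => simp [h] at hf0
  | cons b t =>
      rw [h] at hf0
      simp only [List.head?_cons, Option.some.injEq] at hf0
      simp [hf0]

end fix

end Stmt1Aux

/-- Theorem 3: the special instance of the main theorem where `v_i = w_i = g(i)`,
`w_i` is the prefix of `g^∞(0)` before the first occurrence of `i`, and `u_i` is
the factor `f^∞(0)_{|g(w_i)|, |g(w_i i)|}`. -/
theorem stmt_1 {S : Type*} (nf ng : ℕ) [NeZero nf] [NeZero ng]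
    (f : Fin nf → List (Fin nf)) (g : Fin ng → List (Fin ng))
    (hf : ∀ a, f a ≠ []) (hg : ∀ a, g a ≠ [])
    (hf0 : (f 0).head? = some 0) (hf0len : 1 < (f 0).length)
    (hg0 : (g 0).head? = some 0) (hg0len : 1 < (g 0).length)
    (τ : Fin nf → S) (ρ : Fin ng → S)
    -- `p i` is the position of the first occurrence of `i` in `g^∞(0)`;
    -- its existence expresses that every letter of `Γ_g` occurs in `g^∞(0)`
    (p : Fin ng → ℕ)
    (hp : ∀ i, fixpt g 0 (p i) = i)
    (hpfirst : ∀ i, ∀ j < p i, fixpt g 0 j ≠ i)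
    -- `w i` is the prefix of `g^∞(0)` in front of the first occurrence of `i`
    (w : Fin ng → List (Fin ng))
    (hw : ∀ i, w i = (List.range (p i)).map (fixpt g 0))
    -- `u i = f^∞(0)_{|g(w_i)|, |g(w_i i)|}`
    (u : Fin ng → List (Fin nf))
    (hu : ∀ i, u i =
      (List.range (g i).length).map fun j => fixpt f 0 ((applyW g (w i)).length + j))
    (hcode : ∀ i, (u i).map τ = (g i).map ρ)
    (hfu : ∀ i, applyW f (u i) = (g i).flatMap u) :
    applyC τ (fixpt f 0) = applyC ρ (fixpt g 0) := by
  classical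
  have hσg0 : fixpt g 0 0 = 0 := Stmt1Aux.fixpt_zero g 0 hg0
  have hp0 : p 0 = 0 := by
    by_contra h
    exact hpfirst 0 0 (Nat.pos_of_ne_zero h) hσg0
  -- `u 0` is a prefix of `f^∞(0)`
  have hu0 : Stmt1Aux.IsPrefS (fixpt f 0) (u 0) := by
    have hw0 : w 0 = [] := by rw [hw 0, hp0]; simp
    have he : u 0 = (List.range (g 0).length).map (fixpt f 0) := by
      rw [hu 0, hw0]
      simp [applyW]
    rw [he]
    exact Stmt1Aux.isPrefS_range_map _ _
  have hulen : ∀ i, (u i).length = (g i).length := by intro i; rw [hu i]; simp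
  set Pre : ℕ → List (Fin ng) := fun n => (List.range n).map (fixpt g 0) with hPre
  set U : ℕ → List (Fin nf) := fun n => (Pre n).flatMap u with hUdef
  set L : ℕ → ℕ := fun n => (applyW g (Pre n)).length with hLdef
  have hPrePref : ∀ n, Stmt1Aux.IsPrefS (fixpt g 0) (Pre n) := fun n =>
    Stmt1Aux.isPrefS_range_map (fixpt g 0) n
  have hPreLen : ∀ n, (Pre n).length = n := by intro n; simp [hPre]
  have hUlen : ∀ n, (U n).length = L n := by
    intro n
    simp only [hUdef, hLdef, applyW, List.length_flatMap]
    congr 1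
    exact List.map_congr_left fun i _ => by simp [Function.comp, hulen i]
  have hgPre : ∀ n, applyW g (Pre n) = Pre (L n) := by
    intro n
    apply Stmt1Aux.eq_of_isPrefS
      (Stmt1Aux.isPrefS_applyW g 0 hg hg0 hg0len (hPrePref n)) (hPrePref (L n))
    rw [hPreLen]
  have hLsucc : ∀ n, L (n + 1) = L n + (g (fixpt g 0 n)).length := by
    intro n
    simp only [hLdef, hPre, List.range_succ, List.map_append, applyW,
      List.flatMap_append, List.length_append, List.map_cons, List.map_nil,
      List.flatMap_cons, List.flatMap_nil, List.append_nil]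
  have hLge : ∀ n, n + 2 ≤ L (n + 1) := by
    intro n
    induction n with
    | zero =>
        rw [hLsucc 0, hσg0]
        have : L 0 = 0 := by simp [hLdef, hPre, applyW]
        omega
    | succ n ih =>
        have h1 : 1 ≤ (g (fixpt g 0 (n+1))).length := List.length_pos_iff.mpr (hg _)
        rw [hLsucc (n+1)]
        omega
  have hfU : ∀ n, applyW f (U n) = U (L n) := by
    intro n
    calc applyW f (U n) = (Pre n).flatMap (fun i => applyW f (u i)) := by
          simp only [hUdef, applyW, List.flatMap_assoc]
      _ = (Pre n).flatMap (fun i => (g i).flatMap u) := by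
          exact congrArg (List.flatMap · (Pre n)) (funext hfu)
      _ = ((Pre n).flatMap g).flatMap u := List.flatMap_assoc.symm
      _ = U (L n) := by
          have := hgPre n
          simp only [applyW] at this
          rw [this]
  have hUmono : ∀ {m n : ℕ}, m ≤ n → U m <+: U n := by
    intro m n hmn
    have hPmn : Pre m <+: Pre n :=
      Stmt1Aux.prefix_of_isPrefS (hPrePref m) (hPrePref n) (by rw [hPreLen, hPreLen]; exact hmn)
    exact Stmt1Aux.flatMap_prefix u hPmn
  have main : ∀ n, Stmt1Aux.IsPrefS (fixpt f 0) (U n) := by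
    intro n
    induction n with
    | zero => intro j hj; simp [hUdef, hPre] at hj
    | succ n ih =>
        rcases n with _ | m
        · have hU1 : U 1 = u 0 := by
            have : List.range 1 = [0] := rfl
            simp [hUdef, hPre, this, hσg0]
          rw [hU1]
          exact hu0
        · have h1 := Stmt1Aux.isPrefS_applyW f 0 hf hf0 hf0len ih
          rw [hfU (m+1)] at h1
          exact Stmt1Aux.isPrefS_of_prefix (hUmono (hLge m)) h1
  funext k
  show τ (fixpt f 0 k) = ρ (fixpt g 0 k)
  have hLk := hLge k
  have hk : k < (U (k+1)).length := by rw [hUlen]; omega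
  have h1 : (U (k+1))[k] = fixpt f 0 k := main (k+1) k hk
  have h2 : (U (k+1)).map τ = (Pre (L (k+1))).map ρ := by
    calc (U (k+1)).map τ = (Pre (k+1)).flatMap (fun i => (u i).map τ) := by
          simp only [hUdef, List.map_flatMap]
      _ = (Pre (k+1)).flatMap (fun i => (g i).map ρ) := congrArg (List.flatMap · (Pre (k+1))) (funext hcode)
      _ = ((Pre (k+1)).flatMap g).map ρ := List.map_flatMap.symm
      _ = (Pre (L (k+1))).map ρ := by
          have := hgPre (k+1)
          simp only [applyW] at this
          rw [this]
  have hk2 : k < ((U (k+1)).map τ).length := by simpa using hk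
  have hk3 : k < ((Pre (L (k+1))).map ρ).length := by
    simp only [List.length_map, hPreLen]
    omega
  have e1 : ((U (k+1)).map τ)[k] = τ (fixpt f 0 k) := by
    rw [List.getElem_map, h1]
  have e2 : ((Pre (L (k+1))).map ρ)[k] = ρ (fixpt g 0 k) := by
    simp [hPre]
  rw [← e1, ← e2]
  exact List.getElem_of_eq h2 hk2
end

section
/- Let fib = f^∞(0) be the binary Fibonacci sequence for the morphism f on {0,1} with f(0) = 01, f(1) = 0. Let g be the morphism on {0,1,2} with g(0) = 02, g(1) = 021, g(2) = 102, and let ρ be the coding with ρ(0) = ρ(1) = 0, ρ(2) = 1. Then fib = ρ(g^∞(0)). -/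
namespace Stmt10Aux

variable {Γ Δ : Type*}

theorem applyW_append (f : Γ → List Γ) (u v : List Γ) :
    applyW f (u ++ v) = applyW f u ++ applyW f v := List.flatMap_append

theorem prefix_applyW (f : Γ → List Γ) {u v : List Γ} (h : u <+: v) :
    applyW f u <+: applyW f v := by
  obtain ⟨t, rfl⟩ := h
  exact ⟨applyW f t, (applyW_append f u t).symm⟩

theorem iter_prefix_succ (f : Γ → List Γ) (a : Γ) (t : List Γ) (ha : f a = a :: t) (n : ℕ) :
    (applyW f)^[n] [a] <+: (applyW f)^[n + 1] [a] := by
  induction n with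
  | zero =>
    have : applyW f [a] = f a := by simp [applyW]
    simp only [Function.iterate_zero, id_eq, zero_add, Function.iterate_one, this, ha]
    exact ⟨t, rfl⟩
  | succ n ih =>
    rw [Function.iterate_succ_apply' (applyW f) n, Function.iterate_succ_apply' (applyW f) (n+1)]
    exact prefix_applyW f ih

theorem iter_prefix (f : Γ → List Γ) (a : Γ) (t : List Γ) (ha : f a = a :: t)
    {n m : ℕ} (h : n ≤ m) : (applyW f)^[n] [a] <+: (applyW f)^[m] [a] := by
  induction m with
  | zero => simp_all
  | succ m ih =>
    rcases Nat.lt_or_ge n (m+1) with h' | h'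
    · exact (ih (Nat.lt_succ_iff.mp h')).trans (iter_prefix_succ f a t ha m)
    · have : n = m + 1 := le_antisymm h h'
      subst this; exact List.prefix_refl _

theorem length_applyW_le (f : Γ → List Γ) (hne : ∀ b, f b ≠ []) (w : List Γ) :
    w.length ≤ (applyW f w).length := by
  induction w with
  | nil => simp [applyW]
  | cons x w ih =>
    have h1 : 1 ≤ (f x).length := List.length_pos_iff.mpr (hne x)
    simp only [applyW, List.flatMap_cons, List.length_append, List.length_cons]
    simp only [applyW] at ih
    omega

theorem length_iter (f : Γ → List Γ) (a : Γ) (t : List Γ) (ha : f a = a :: t)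
    (ht : t ≠ []) (hne : ∀ b, f b ≠ []) (n : ℕ) :
    n + 1 ≤ (((applyW f)^[n] [a])).length := by
  induction n with
  | zero => simp
  | succ n ih =>
    obtain ⟨r, hr⟩ := iter_prefix f a t ha (Nat.zero_le n)
    simp only [Function.iterate_zero, id_eq, List.singleton_append] at hr
    rw [Function.iterate_succ_apply' (applyW f) n, ← hr]
    have h2 : 2 ≤ (f a).length := by
      rw [ha]; have := List.length_pos_iff.mpr ht; simp; omega
    have h3 : r.length ≤ (applyW f r).length := length_applyW_le f hne r
    have h4 : n + 1 ≤ (a :: r).length := by rw [hr]; exact ih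
    simp only [applyW, List.flatMap_cons, List.length_append]
    simp only [applyW] at h3
    simp only [List.length_cons] at h4
    omega

theorem fixpt_eq_getElem (f : Γ → List Γ) (a : Γ) (t : List Γ) (ha : f a = a :: t)
    (ht : t ≠ []) (hne : ∀ b, f b ≠ []) (n m : ℕ) (h : n + 1 ≤ m)
    (hlen : n < ((applyW f)^[m] [a]).length) :
    fixpt f a n = ((applyW f)^[m] [a])[n] := by
  have h1 : n < ((applyW f)^[n+1] [a]).length := by
    have := length_iter f a t ha ht hne (n+1); omega
  rw [fixpt, List.getD_eq_getElem _ _ h1]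
  exact (iter_prefix f a t ha h).getElem h1

theorem flatMap_comm (d : Γ → List Δ) (h : Γ → List Γ) (g : Δ → List Δ)
    (H : ∀ x, (h x).flatMap d = (d x).flatMap g) (w : List Γ) :
    (w.flatMap h).flatMap d = (w.flatMap d).flatMap g := by
  induction w with
  | nil => simp
  | cons x w ih =>
    simp only [List.flatMap_cons, List.flatMap_append, ih, H x]

-- The concrete morphisms
abbrev F : Fin 2 → List (Fin 2) := ![[0, 1], [0]]
abbrev G : Fin 3 → List (Fin 3) := ![[0, 2], [0, 2, 1], [1, 0, 2]]
abbrev D : Fin 2 → List (Fin 3) := ![[0, 2], [1]]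
abbrev F2 : Fin 2 → List (Fin 2) := ![[0, 1, 0], [0, 1]]
abbrev ρ : Fin 3 → Fin 2 := ![0, 0, 1]

theorem D_F2_comm (x : Fin 2) : (F2 x).flatMap D = (D x).flatMap G := by
  fin_cases x <;> rfl

theorem F2_eq_FF (x : Fin 2) : F2 x = (F x).flatMap F := by
  fin_cases x <;> rfl

theorem rho_D (x : Fin 2) : (D x).map ρ = F x := by
  fin_cases x <;> rfl

theorem applyW_F2 (w : List (Fin 2)) : applyW F2 w = applyW F (applyW F w) := by
  have hfe : F2 = fun x => (F x).flatMap F := funext F2_eq_FF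
  simp only [applyW, List.flatMap_assoc, hfe]

theorem iter_F2 (n : ℕ) : (applyW F2)^[n] [(0 : Fin 2)] = (applyW F)^[2 * n] [0] := by
  induction n with
  | zero => rfl
  | succ n ih =>
    rw [Function.iterate_succ_apply' (applyW F2) n, ih, applyW_F2]
    have : 2 * (n + 1) = (2 * n) + 1 + 1 := by ring
    rw [this, Function.iterate_succ_apply' (applyW F) (2*n+1),
      Function.iterate_succ_apply' (applyW F) (2*n)]

theorem iter_G_split (n : ℕ) :
    ((applyW F2)^[n] [(0 : Fin 2)]).flatMap D
      = (applyW G)^[n] [(0 : Fin 3)] ++ (applyW G)^[n] [2] := by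
  induction n with
  | zero => rfl
  | succ n ih =>
    rw [Function.iterate_succ_apply' (applyW F2) n]
    have step : ((applyW F2 ((applyW F2)^[n] [0]))).flatMap D
        = applyW G (((applyW F2)^[n] [(0:Fin 2)]).flatMap D) := by
      simpa [applyW] using flatMap_comm D F2 G D_F2_comm ((applyW F2)^[n] [(0:Fin 2)])
    rw [step, ih, applyW_append,
      Function.iterate_succ_apply' (applyW G) n ([(0:Fin 3)]),
      Function.iterate_succ_apply' (applyW G) n [2]]

theorem map_rho_flatMap_D (w : List (Fin 2)) : (w.flatMap D).map ρ = applyW F w := by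
  have hfe : (fun a => (D a).map ρ) = F := funext rho_D
  rw [List.map_flatMap, hfe, applyW]

end Stmt10Aux

open Stmt10Aux in
/-- The Fibonacci sequence `fib = f^∞(0)` for `f(0)=01, f(1)=0` equals
`ρ(g^∞(0))` for `g(0)=02, g(1)=021, g(2)=102`, `ρ(0)=ρ(1)=0, ρ(2)=1`. -/
theorem stmt_10 :
    fixpt (![[0, 1], [0]] : Fin 2 → List (Fin 2)) 0 =
      applyC (![0, 0, 1] : Fin 3 → Fin 2)
        (fixpt (![[0, 2], [0, 2, 1], [1, 0, 2]] : Fin 3 → List (Fin 3)) 0) := by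
  funext n
  show fixpt F 0 n = ρ (fixpt G 0 n)
  -- basic hypotheses
  have hFne : ∀ b, F b ≠ [] := by decide
  have hGne : ∀ b, G b ≠ [] := by decide
  have hFa : F 0 = 0 :: [1] := rfl
  have hGa : G 0 = 0 :: [2] := rfl
  set m := n + 1 with hm
  -- RHS: unfold fixpt G
  have hGlen : n < ((applyW G)^[m] [(0:Fin 3)]).length := by
    have := length_iter G 0 [2] hGa (by simp) hGne m; omega
  have hR : fixpt G 0 n = ((applyW G)^[m] [(0:Fin 3)])[n] := by
    rw [fixpt, List.getD_eq_getElem _ _ hGlen]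
  -- the G-iterate is a prefix of the D-image of the F2-iterate
  have hsplit := iter_G_split m
  have hpre : (applyW G)^[m] [(0:Fin 3)] <+: ((applyW F2)^[m] [(0:Fin 2)]).flatMap D :=
    hsplit ▸ ⟨(applyW G)^[m] [2], rfl⟩
  have hlen2 : n < (((applyW F2)^[m] [(0:Fin 2)]).flatMap D).length :=
    lt_of_lt_of_le hGlen hpre.length_le
  have hR2 : fixpt G 0 n = (((applyW F2)^[m] [(0:Fin 2)]).flatMap D)[n] := by
    rw [hR]; exact hpre.getElem hGlen
  -- apply ρ: getElem of map
  have hlen3 : n < ((((applyW F2)^[m] [(0:Fin 2)]).flatMap D).map ρ).length := by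
    simpa using hlen2
  have hR3 : ρ (fixpt G 0 n) = ((((applyW F2)^[m] [(0:Fin 2)]).flatMap D).map ρ)[n] := by
    rw [hR2, List.getElem_map]
  rw [hR3]
  -- rewrite via ρ∘D = F and F2-iterates as F-iterates
  have key : (((applyW F2)^[m] [(0:Fin 2)]).flatMap D).map ρ
      = (applyW F)^[2 * m + 1] [0] := by
    rw [map_rho_flatMap_D, iter_F2, ← Function.iterate_succ_apply' (applyW F) (2*m)]
  -- LHS
  have hlen4 : n < ((applyW F)^[2 * m + 1] [(0:Fin 2)]).length := by
    rw [← key]; exact hlen3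
  have hL : fixpt F 0 n = ((applyW F)^[2 * m + 1] [(0:Fin 2)])[n] :=
    fixpt_eq_getElem F 0 [1] hFa (by simp) hFne n (2*m+1) (by omega) hlen4
  rw [hL]
  congr 1
  exact key.symm
end

section
/- Let f and g be the morphisms on {0,1,2} defined by f(0) = 0210, f(1) = 02102, f(2) = 2021 and g(0) = 02, g(1) = 021, g(2) = 102, and let τ be the coding with τ(0) = τ(1) = 0, τ(2) = 1. Then τ(f^∞(0)) = τ(g^∞(0)). -/
namespace Stmt13

def fm : Fin 3 → List (Fin 3) := ![[0, 2, 1, 0], [0, 2, 1, 0, 2], [2, 0, 2, 1]]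
def gm : Fin 3 → List (Fin 3) := ![[0, 2], [0, 2, 1], [1, 0, 2]]

def fA : List (Fin 3) → List (Fin 3) := applyW fm
def gA : List (Fin 3) → List (Fin 3) := applyW gm

def F2 (w : List (Fin 3)) : List (Fin 3) := fA (fA w)
def G3 (w : List (Fin 3)) : List (Fin 3) := gA (gA (gA w))

def R (c a : Fin 3) : Prop := (c = 0 ∧ a = 2) ∨ (c ≠ 0 ∧ a ≠ 2)

instance : DecidableRel R := fun c a =>
  inferInstanceAs (Decidable ((c = 0 ∧ a = 2) ∨ (c ≠ 0 ∧ a ≠ 2)))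

def carry (c : Fin 3) : List (Fin 3) := if c = 0 then [0, 2, 1, 0] else []

lemma applyW_append (f : Fin 3 → List (Fin 3)) (a b : List (Fin 3)) :
    applyW f (a ++ b) = applyW f a ++ applyW f b := by
  simp [applyW]

lemma fA_append (a b : List (Fin 3)) : fA (a ++ b) = fA a ++ fA b := applyW_append ..
lemma gA_append (a b : List (Fin 3)) : gA (a ++ b) = gA a ++ gA b := applyW_append ..

lemma F2_append (a b : List (Fin 3)) : F2 (a ++ b) = F2 a ++ F2 b := by
  simp [F2, fA_append]
lemma G3_append (a b : List (Fin 3)) : G3 (a ++ b) = G3 a ++ G3 b := by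
  simp [G3, gA_append]

lemma F2_cons (a : Fin 3) (t : List (Fin 3)) : F2 (a :: t) = F2 [a] ++ F2 t := by
  rw [show a :: t = [a] ++ t from rfl, F2_append]
lemma G3_cons (a : Fin 3) (t : List (Fin 3)) : G3 (a :: t) = G3 [a] ++ G3 t := by
  rw [show a :: t = [a] ++ t from rfl, G3_append]

lemma gA_cons (a : Fin 3) (t : List (Fin 3)) : gA (a :: t) = gm a ++ gA t := by
  simp [gA, applyW]

lemma step : ∀ c a : Fin 3, R c a → carry c ++ F2 [a] = G3 [a] ++ carry a := by decide

lemma keyL : ∀ (t : List (Fin 3)) (c : Fin 3), List.Chain' R (c :: t) →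
    carry c ++ F2 t = G3 t ++ carry (t.getLastD c) := by
  intro t
  induction t with
  | nil => intro c _; simp [F2, G3, fA, gA, applyW]
  | cons a t' ih =>
    intro c h
    replace h := List.isChain_cons_cons.mp h
    rw [F2_cons, G3_cons, List.getLastD_cons]
    calc carry c ++ (F2 [a] ++ F2 t')
        = (carry c ++ F2 [a]) ++ F2 t' := by rw [List.append_assoc]
      _ = (G3 [a] ++ carry a) ++ F2 t' := by rw [step c a h.1]
      _ = G3 [a] ++ (carry a ++ F2 t') := by rw [List.append_assoc]
      _ = G3 [a] ++ (G3 t' ++ carry (t'.getLastD a)) := by rw [ih a h.2]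
      _ = _ := by rw [List.append_assoc]

lemma gm0 : gm 0 = [0, 2] := rfl
lemma gm1 : gm 1 = [0, 2, 1] := rfl
lemma gm2 : gm 2 = [1, 0, 2] := rfl

lemma chainG : ∀ (w : List (Fin 3)), List.Chain' R w →
    ∀ c : Fin 3, c ≠ 0 → List.Chain' R (c :: gA w) := by
  intro w
  induction w with
  | nil => intro _ c _; simp [gA, applyW]; exact List.isChain_singleton c
  | cons a t ih =>
    intro h c hc
    have ht : List.Chain' R t := h.tail
    rw [gA_cons]
    fin_cases a
    · show List.Chain' R (c :: 0 :: 2 :: gA t)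
      exact List.isChain_cons_cons.mpr ⟨Or.inr ⟨hc, by decide⟩,
        List.isChain_cons_cons.mpr ⟨by decide, ih ht 2 (by decide)⟩⟩
    · show List.Chain' R (c :: 0 :: 2 :: 1 :: gA t)
      exact List.isChain_cons_cons.mpr ⟨Or.inr ⟨hc, by decide⟩,
        List.isChain_cons_cons.mpr ⟨by decide,
          List.isChain_cons_cons.mpr ⟨by decide, ih ht 1 (by decide)⟩⟩⟩
    · show List.Chain' R (c :: 1 :: 0 :: 2 :: gA t)
      exact List.isChain_cons_cons.mpr ⟨Or.inr ⟨hc, by decide⟩,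
        List.isChain_cons_cons.mpr ⟨by decide,
          List.isChain_cons_cons.mpr ⟨by decide, ih ht 2 (by decide)⟩⟩⟩

def v (m : ℕ) : List (Fin 3) := gA^[m] [0]
def u (n : ℕ) : List (Fin 3) := fA^[n] [0]

lemma chain_v : ∀ m, List.Chain' R (1 :: v m) := by
  intro m
  induction m with
  | zero =>
    show List.Chain' R [1, 0]
    exact List.isChain_cons_cons.mpr ⟨Or.inr ⟨by decide, by decide⟩, List.isChain_singleton 0⟩
  | succ m ih =>
    have : v (m + 1) = gA (v m) := Function.iterate_succ_apply' ..
    rw [this]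
    exact chainG (v m) ih.tail 1 (by decide)

lemma G3_v (m : ℕ) : G3 (v m) = v (m + 3) := by
  show gA (gA (gA (gA^[m] [0]))) = gA^[m + 3] [0]
  rw [show m + 3 = (m + 2) + 1 from rfl, Function.iterate_succ_apply',
    show m + 2 = (m + 1) + 1 from rfl, Function.iterate_succ_apply',
    Function.iterate_succ_apply']

lemma F2_v (m : ℕ) : F2 (v m) = v (m + 3) ++ carry ((v m).getLastD 1) := by
  have h := keyL (v m) 1 (chain_v m)
  rw [show carry 1 = [] from rfl] at h
  simpa [G3_v] using h

lemma iterEq : ∀ k, ∃ d, u (2 * k) = v (3 * k) ++ d := by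
  intro k
  induction k with
  | zero => exact ⟨[], rfl⟩
  | succ k ih =>
    obtain ⟨d, hd⟩ := ih
    refine ⟨carry ((v (3 * k)).getLastD 1) ++ F2 d, ?_⟩
    have h1 : u (2 * (k + 1)) = F2 (u (2 * k)) := by
      show fA^[2 * k + 2] [0] = fA (fA (fA^[2 * k] [0]))
      rw [show 2 * k + 2 = (2 * k + 1) + 1 from rfl, Function.iterate_succ_apply',
        Function.iterate_succ_apply']
    rw [h1, hd, F2_append, F2_v, show 3 * (k + 1) = 3 * k + 3 from rfl,
      List.append_assoc]

lemma fA_pref {p q : List (Fin 3)} (h : p <+: q) : fA p <+: fA q := by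
  obtain ⟨r, rfl⟩ := h
  rw [fA_append]; exact List.prefix_append ..

lemma gA_pref {p q : List (Fin 3)} (h : p <+: q) : gA p <+: gA q := by
  obtain ⟨r, rfl⟩ := h
  rw [gA_append]; exact List.prefix_append ..

lemma u_step (n : ℕ) : u n <+: u (n + 1) := by
  induction n with
  | zero => decide
  | succ n ih =>
    have h1 : u (n + 1) = fA (u n) := Function.iterate_succ_apply' ..
    have h2 : u (n + 2) = fA (u (n + 1)) := Function.iterate_succ_apply' ..
    rw [h1, h2]; exact fA_pref ih

lemma v_step (n : ℕ) : v n <+: v (n + 1) := by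
  induction n with
  | zero => decide
  | succ n ih =>
    have h1 : v (n + 1) = gA (v n) := Function.iterate_succ_apply' ..
    have h2 : v (n + 2) = gA (v (n + 1)) := Function.iterate_succ_apply' ..
    rw [h1, h2]; exact gA_pref ih

lemma u_mono {n m : ℕ} (h : n ≤ m) : u n <+: u m := by
  induction m, h using Nat.le_induction with
  | base => exact List.prefix_rfl
  | succ m _ ih => exact ih.trans (u_step m)

lemma v_mono {n m : ℕ} (h : n ≤ m) : v n <+: v m := by
  induction m, h using Nat.le_induction with
  | base => exact List.prefix_rfl
  | succ m _ ih => exact ih.trans (v_step m)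

lemma fm_len : ∀ a : Fin 3, 2 ≤ (fm a).length := by decide
lemma gm_len : ∀ a : Fin 3, 2 ≤ (gm a).length := by decide

lemma fA_len : ∀ w : List (Fin 3), 2 * w.length ≤ (fA w).length := by
  intro w
  induction w with
  | nil => simp [fA, applyW]
  | cons a t ih =>
    have h : fA (a :: t) = fm a ++ fA t := by simp [fA, applyW]
    rw [h, List.length_append, List.length_cons]
    have := fm_len a
    omega

lemma gA_len : ∀ w : List (Fin 3), 2 * w.length ≤ (gA w).length := by
  intro w
  induction w with
  | nil => simp [gA, applyW]
  | cons a t ih =>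
    have h : gA (a :: t) = gm a ++ gA t := by simp [gA, applyW]
    rw [h, List.length_append, List.length_cons]
    have := gm_len a
    omega

lemma u_len : ∀ n, n + 1 ≤ (u n).length := by
  intro n
  induction n with
  | zero => simp [u]
  | succ n ih =>
    have h1 : u (n + 1) = fA (u n) := Function.iterate_succ_apply' ..
    have h2 := fA_len (u n)
    rw [h1]; omega

lemma v_len : ∀ n, n + 1 ≤ (v n).length := by
  intro n
  induction n with
  | zero => simp [v]
  | succ n ih =>
    have h1 : v (n + 1) = gA (v n) := Function.iterate_succ_apply' ..
    have h2 := gA_len (v n)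
    rw [h1]; omega

lemma main_eq (n : ℕ) : fixpt fm 0 n = fixpt gm 0 n := by
  obtain ⟨d, hd⟩ := iterEq (n + 1)
  -- prefixes
  have hu : u (n + 1) <+: u (2 * (n + 1)) := u_mono (by omega)
  have hv : v (n + 1) <+: v (3 * (n + 1)) := v_mono (by omega)
  have hvu : v (3 * (n + 1)) <+: u (2 * (n + 1)) := ⟨d, hd.symm⟩
  have hun : n < (u (n + 1)).length := by have := u_len (n + 1); omega
  have hvn : n < (v (n + 1)).length := by have := v_len (n + 1); omega
  have hvn' : n < (v (3 * (n + 1))).length := by have := v_len (3 * (n + 1)); omega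
  have e1 : (u (n + 1))[n]'hun = (u (2 * (n + 1)))[n]'(hu.length_le.trans_lt' hun) :=
    hu.getElem hun
  have e2 : (v (n + 1))[n]'hvn = (v (3 * (n + 1)))[n]'hvn' := hv.getElem hvn
  have e3 : (v (3 * (n + 1)))[n]'hvn' = (u (2 * (n + 1)))[n]'(hvu.length_le.trans_lt' hvn') :=
    hvu.getElem hvn'
  show (u (n + 1)).getD n 0 = (v (n + 1)).getD n 0
  rw [List.getD_eq_getElem _ _ hun, List.getD_eq_getElem _ _ hvn, e1, e2, e3]

end Stmt13

/-- `τ(f^∞(0)) = τ(g^∞(0))` for `f(0)=0210, f(1)=02102, f(2)=2021`,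
`g(0)=02, g(1)=021, g(2)=102` and `τ(0)=τ(1)=0, τ(2)=1`. -/
theorem stmt_13 :
    applyC (![0, 0, 1] : Fin 3 → Fin 2)
        (fixpt (![[0, 2, 1, 0], [0, 2, 1, 0, 2], [2, 0, 2, 1]] : Fin 3 → List (Fin 3)) 0) =
      applyC (![0, 0, 1] : Fin 3 → Fin 2)
        (fixpt (![[0, 2], [0, 2, 1], [1, 0, 2]] : Fin 3 → List (Fin 3)) 0) := by
  funext n
  show (![0, 0, 1] : Fin 3 → Fin 2) (fixpt Stmt13.fm 0 n)
      = (![0, 0, 1] : Fin 3 → Fin 2) (fixpt Stmt13.gm 0 n)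
  rw [Stmt13.main_eq n]
end

section
/- Let f and g be the morphisms on {0,1,2} defined by f(0) = 01, f(1) = 21, f(2) = 2 and g(0) = 012, g(1) = 12, g(2) = 2. Then every nonempty word u over {0,1,2} that contains the letter 0 satisfies |f(u)| < |g(u)|. Consequently, there exist no nonempty words u_0, v_0 over {0,1,2}, both starting with 0, such that f^n(u_0) = g^n(v_0) for every n ≥ 0. -/
lemma aux_le : ∀ u : List (Fin 3),
    (applyW (![[0, 1], [2, 1], [2]] : Fin 3 → List (Fin 3)) u).length ≤
      (applyW (![[0, 1, 2], [1, 2], [2]] : Fin 3 → List (Fin 3)) u).length := by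
  intro u
  induction u with
  | nil => simp [applyW]
  | cons a u ih =>
    simp only [applyW, List.flatMap_cons, List.length_append] at *
    have : ((![[0, 1], [2, 1], [2]] : Fin 3 → List (Fin 3)) a).length ≤
        ((![[0, 1, 2], [1, 2], [2]] : Fin 3 → List (Fin 3)) a).length := by
      fin_cases a <;> decide
    omega

lemma aux_lt : ∀ u : List (Fin 3), (0 : Fin 3) ∈ u →
    (applyW (![[0, 1], [2, 1], [2]] : Fin 3 → List (Fin 3)) u).length <
      (applyW (![[0, 1, 2], [1, 2], [2]] : Fin 3 → List (Fin 3)) u).length := by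
  intro u
  induction u with
  | nil => simp
  | cons a u ih =>
    intro h
    simp only [applyW, List.flatMap_cons, List.length_append] at *
    rcases List.mem_cons.1 h with rfl | h
    · have := aux_le u
      simp only [applyW] at this
      simp only [Matrix.cons_val_zero, List.length_cons, List.length_nil]
      omega
    · have := ih h
      have h2 : ((![[0, 1], [2, 1], [2]] : Fin 3 → List (Fin 3)) a).length ≤
          ((![[0, 1, 2], [1, 2], [2]] : Fin 3 → List (Fin 3)) a).length := by
        fin_cases a <;> decide
      omega

/-- For `f(0)=01, f(1)=21, f(2)=2` and `g(0)=012, g(1)=12, g(2)=2`: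
every nonempty word `u` containing the letter `0` satisfies `|f(u)| < |g(u)|`;
consequently there are no nonempty words `u₀, v₀` both starting with `0` such
that `f^n(u₀) = g^n(v₀)` for all `n`. -/
theorem stmt_15 :
    (∀ u : List (Fin 3), u ≠ [] → (0 : Fin 3) ∈ u →
      (applyW (![[0, 1], [2, 1], [2]] : Fin 3 → List (Fin 3)) u).length <
        (applyW (![[0, 1, 2], [1, 2], [2]] : Fin 3 → List (Fin 3)) u).length) ∧
    ¬ ∃ (u₀ v₀ : List (Fin 3)), u₀ ≠ [] ∧ v₀ ≠ [] ∧
        u₀.head? = some 0 ∧ v₀.head? = some 0 ∧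
        ∀ n : ℕ, (applyW (![[0, 1], [2, 1], [2]] : Fin 3 → List (Fin 3)))^[n] u₀ =
          (applyW (![[0, 1, 2], [1, 2], [2]] : Fin 3 → List (Fin 3)))^[n] v₀ := by
  refine ⟨fun u _ h => aux_lt u h, ?_⟩
  rintro ⟨u₀, v₀, hu, hv, hu0, hv0, hn⟩
  have h0 := hn 0
  simp only [Function.iterate_zero, id] at h0
  subst h0
  have h1 := hn 1
  simp only [Function.iterate_one] at h1
  have hmem : (0 : Fin 3) ∈ u₀ := by
    cases u₀ with
    | nil => exact absurd rfl hu
    | cons a l => simp_all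
  have := aux_lt u₀ hmem
  rw [h1] at this
  exact lt_irrefl _ this
end

section
/- Let f be the morphism on {0,1,2} with f(2) = 21, f(1) = 01, f(0) = 0 and let τ be the coding with τ(0) = 0, τ(1) = τ(2) = 1. Then the sequence τ(f^∞(2)) equals the sequence spir defined by spir(n) = 1 if n = k(k+1)/2 for some integer k ≥ 0, and spir(n) = 0 otherwise; i.e. spir = 1101001000100001⋯, consisting of infinitely many ones with the number of zeros between successive ones being 0,1,2,3,… respectively. In particular, spir is a morphic sequence. -/
namespace Stmt16

def T : ℕ → ℕ
  | 0 => 0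
  | k + 1 => T k + k + 1

lemma two_T (k : ℕ) : 2 * T k = k * (k + 1) := by
  induction k with
  | zero => rfl
  | succ k ih => show 2 * (T k + k + 1) = _; nlinarith [ih]

lemma T_div (k : ℕ) : k * (k + 1) / 2 = T k := by have := two_T k; omega

lemma T_mono : Monotone T := monotone_nat_of_le_succ fun n => by show _ ≤ T n + n + 1; omega

lemma le_T (n : ℕ) : n ≤ T n := by
  induction n with
  | zero => exact Nat.le_refl 0
  | succ n ih => show _ ≤ T n + n + 1; omega

abbrev F : Fin 3 → List (Fin 3) := ![[0], [0, 1], [2, 1]]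

def block (j : ℕ) : List (Fin 3) := List.replicate j 0 ++ [1]

def g (m : ℕ) : List (Fin 3) := 2 :: (List.range m).flatMap block

lemma g_succ (m : ℕ) : g (m + 1) = g m ++ block m := by
  simp [g, List.range_succ]

lemma g_len (m : ℕ) : (g m).length = T m + 1 := by
  induction m with
  | zero => rfl
  | succ m ih => rw [g_succ, List.length_append, ih]; simp [block, T]; omega

lemma applyW_replicate (m : ℕ) : applyW F (List.replicate m 0) = List.replicate m 0 := by
  induction m with
  | zero => rfl
  | succ m ih =>
    rw [List.replicate_succ]
    show applyW F (0 :: _) = _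
    simp only [applyW, List.flatMap_cons] at *
    rw [ih]; rfl

lemma applyW_block (m : ℕ) : applyW F (block m) = block (m + 1) := by
  simp only [block, applyW, List.flatMap_append] at *
  have := applyW_replicate m
  simp only [applyW] at this
  rw [this]
  have h1 : ([1] : List (Fin 3)).flatMap F = [0, 1] := rfl
  rw [h1, List.replicate_succ']
  simp

lemma applyW_g (m : ℕ) : applyW F (g m) = g (m + 1) := by
  induction m with
  | zero => rfl
  | succ m ih =>
    rw [g_succ, g_succ]
    show (g m ++ block m).flatMap F = _
    rw [List.flatMap_append]
    show applyW F (g m) ++ applyW F (block m) = _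
    rw [ih, applyW_block]

lemma iter_g (m : ℕ) : (applyW F)^[m] [2] = g m := by
  induction m with
  | zero => rfl
  | succ m ih => rw [Function.iterate_succ_apply', ih, applyW_g]

lemma key (m : ℕ) : ∀ p, p ≤ T m → ((g m).getD p 2 ≠ 0 ↔ ∃ k, p = T k) := by
  induction m with
  | zero =>
    intro p hp
    have hp0 : p = 0 := Nat.le_zero.mp hp
    subst hp0
    constructor
    · intro _; exact ⟨0, rfl⟩
    · intro _; decide
  | succ m ih =>
    intro p hp
    rw [g_succ]
    rcases le_or_gt p (T m) with h | h
    · rw [List.getD_append _ _ _ _ (by rw [g_len]; omega)]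
      exact ih p h
    · rw [List.getD_append_right _ _ _ _ (by rw [g_len]; omega), g_len]
      have hT : T (m + 1) = T m + m + 1 := rfl
      set q := p - (T m + 1) with hq
      have hqm : q ≤ m := by omega
      rcases eq_or_lt_of_le hqm with he | hlt
      · have hp1 : p = T (m + 1) := by omega
        rw [block]
        rw [List.getD_append_right _ _ _ _ (by simp [he])]
        simp [he]
        exact ⟨m + 1, hp1⟩
      · rw [block, List.getD_append (List.replicate m 0) [1] 2 q (by simpa using hlt)]
        have hz : (List.replicate m (0 : Fin 3)).getD q 2 = 0 := by
          rw [List.getD_eq_getElem _ _ (by simpa using hlt)]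
          simp
        rw [hz]
        simp only [ne_eq, not_true_eq_false, false_iff, not_exists]
        intro k hk
        rcases le_or_gt k m with hk' | hk'
        · have := T_mono hk'; omega
        · have h1 := T_mono (show m + 1 ≤ k from hk')
          rw [hT] at h1; omega

end Stmt16

/-- For `f(2)=21, f(1)=01, f(0)=0` and the coding `τ(0)=0, τ(1)=τ(2)=1`, the
sequence `τ(f^∞(2))` equals `spir`, where `spir(n) = 1` iff `n = k(k+1)/2`
for some `k ≥ 0` and `spir(n) = 0` otherwise; in particular `spir` is a
morphic sequence. -/
theorem stmt_16 (spir : ℕ → Fin 2)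
    (hspir : ∀ n : ℕ, spir n = 1 ↔ ∃ k : ℕ, n = k * (k + 1) / 2) :
    applyC (![0, 1, 1] : Fin 3 → Fin 2)
        (fixpt (![[0], [0, 1], [2, 1]] : Fin 3 → List (Fin 3)) 2) = spir ∧
      ∃ (m : ℕ) (f : Fin m → List (Fin m)) (a : Fin m) (u : List (Fin m))
        (τ : Fin m → Fin 2),
        (∀ b, f b ≠ []) ∧ u ≠ [] ∧ f a = a :: u ∧ spir = applyC τ (fixpt f a) := by
  have main : applyC (![0, 1, 1] : Fin 3 → Fin 2)
      (fixpt (![[0], [0, 1], [2, 1]] : Fin 3 → List (Fin 3)) 2) = spir := by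
    funext n
    have hfix : fixpt Stmt16.F 2 n = (Stmt16.g (n + 1)).getD n 2 := by
      rw [fixpt, Stmt16.iter_g]
    have hle : n ≤ Stmt16.T (n + 1) := le_trans (Stmt16.le_T n) (Stmt16.T_mono (Nat.le_succ n))
    have hk := Stmt16.key (n + 1) n hle
    have hs := hspir n
    simp only [Stmt16.T_div] at hs
    have h2 : ∀ x : Fin 2, x = 0 ∨ x = 1 := by decide
    have hτ : ∀ x : Fin 3, (![0, 1, 1] : Fin 3 → Fin 2) x = 1 ↔ x ≠ 0 := by decide
    show (![0, 1, 1] : Fin 3 → Fin 2) (fixpt Stmt16.F 2 n) = spir n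
    rw [hfix]
    rcases h2 (spir n) with h | h <;> rw [h]
    · rcases h2 ((![0, 1, 1] : Fin 3 → Fin 2) ((Stmt16.g (n + 1)).getD n 2)) with h' | h'
      · exact h'
      · exfalso
        have hex := hk.mp ((hτ _).mp h')
        have h1 : spir n = 1 := hs.mpr hex
        rw [h] at h1
        exact absurd h1 (by decide)
    · exact (hτ _).mpr (hk.mpr (hs.mp h))
  refine ⟨main, 3, Stmt16.F, 2, [1], ![0, 1, 1], by decide, by simp, rfl, main.symm⟩
end

section
/- Let g be the morphism on {0,1,2} with g(0) = 0122, g(1) = 01220, g(2) = 0120. Then even(fib) = ρ(g^∞(0)) for the coding ρ with ρ(0) = ρ(1) = 0, ρ(2) = 1, and odd(fib) = τ(g^∞(0)) for the coding τ with τ(0) = 1, τ(1) = τ(2) = 0. -/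
namespace Aux18

lemma applyW_append {Γ : Type*} (f : Γ → List Γ) (u v : List Γ) :
    applyW f (u ++ v) = applyW f u ++ applyW f v := List.flatMap_append

lemma applyW_iter_append {Γ : Type*} (f : Γ → List Γ) (k : ℕ) (u v : List Γ) :
    (applyW f)^[k] (u ++ v) = (applyW f)^[k] u ++ (applyW f)^[k] v := by
  induction k generalizing u v with
  | zero => simp
  | succ k ih => simp [Function.iterate_succ_apply, applyW_append, ih]

lemma prefix_applyW {Γ : Type*} (f : Γ → List Γ) {u v : List Γ} (h : u <+: v) :
    applyW f u <+: applyW f v := by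
  obtain ⟨t, rfl⟩ := h
  rw [applyW_append]; exact List.prefix_append _ _

lemma length_applyW_ge {Γ : Type*} (f : Γ → List Γ) (h : ∀ a, 1 ≤ (f a).length)
    (w : List Γ) : w.length ≤ (applyW f w).length := by
  induction w with
  | nil => simp [applyW]
  | cons a t ih =>
    have : applyW f (a :: t) = f a ++ applyW f t := rfl
    rw [this, List.length_append, List.length_cons]
    have := h a
    omega

/-- Iterates of the fixed point word form a prefix chain. -/
lemma iter_prefix {Γ : Type*} (f : Γ → List Γ) (a : Γ) (h0 : [a] <+: f a) (m : ℕ) :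
    (applyW f)^[m] [a] <+: (applyW f)^[m + 1] [a] := by
  induction m with
  | zero =>
    simpa [applyW] using h0
  | succ m ih =>
    rw [Function.iterate_succ_apply', Function.iterate_succ_apply' (n := m + 1)]
    exact prefix_applyW f ih

lemma iter_prefix_le {Γ : Type*} (f : Γ → List Γ) (a : Γ) (h0 : [a] <+: f a)
    {m m' : ℕ} (h : m ≤ m') : (applyW f)^[m] [a] <+: (applyW f)^[m'] [a] := by
  induction m' with
  | zero => simp_all
  | succ m' ih =>
    rcases Nat.lt_or_ge m (m' + 1) with hlt | hge
    · exact (ih (by omega)).trans (iter_prefix f a h0 m')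
    · have : m = m' + 1 := by omega
      subst this; exact List.prefix_refl _

/-- Iterates grow in length, given the first letter's image has length ≥ 2. -/
lemma iter_length {Γ : Type*} (f : Γ → List Γ) (a : Γ)
    (h1 : ∀ b, 1 ≤ (f b).length) (h2 : 2 ≤ (f a).length) (h0 : [a] <+: f a) (m : ℕ) :
    m + 1 ≤ ((applyW f)^[m] [a]).length := by
  induction m with
  | zero => simp
  | succ m ih =>
    -- (applyW f)^[m] [a] = a :: t for some t
    have hpre : [a] <+: (applyW f)^[m] [a] :=
      iter_prefix_le f a h0 (Nat.zero_le m)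
    obtain ⟨t, ht⟩ := hpre
    rw [Function.iterate_succ_apply', ← ht]
    have : applyW f ([a] ++ t) = f a ++ applyW f t := by
      rw [applyW_append]; simp [applyW]
    rw [this, List.length_append]
    have hlt : t.length ≤ (applyW f t).length := length_applyW_ge f h1 t
    have hlen : ((applyW f)^[m] [a]).length = t.length + 1 := by
      rw [← ht]; simp
    omega

lemma prefix_getD {Γ : Type*} {u v : List Γ} (h : u <+: v) {n : ℕ}
    (hn : n < u.length) (d : Γ) : u.getD n d = v.getD n d := by
  rw [List.getD_eq_getElem?_getD, List.getD_eq_getElem?_getD,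
    List.getElem?_eq_getElem hn, List.getElem?_eq_getElem (hn.trans_le h.length_le),
    h.getElem hn]

/-- `fixpt` can be read off any sufficiently late iterate. -/
lemma fixpt_eq_iter {Γ : Type*} (f : Γ → List Γ) (a : Γ)
    (h1 : ∀ b, 1 ≤ (f b).length) (h2 : 2 ≤ (f a).length) (h0 : [a] <+: f a)
    {n m : ℕ} (hm : n + 1 ≤ m) :
    fixpt f a n = ((applyW f)^[m] [a]).getD n a := by
  have hlen : n < ((applyW f)^[n + 1] [a]).length := by
    have := iter_length f a h1 h2 h0 (n + 1); omega
  exact prefix_getD (iter_prefix_le f a h0 hm) hlen a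

/-- Reading letter `2i` and `2i+1` of a blown-up word where each block has length 2. -/
lemma flatMap_two_getD {Γ S : Type*} (p : Γ → List S) (hp : ∀ a, (p a).length = 2)
    (w : List Γ) (i : ℕ) (hi : i < w.length) (d : S) (dΓ : Γ) :
    (w.flatMap p).getD (2 * i) d = (p (w.getD i dΓ)).getD 0 d ∧
    (w.flatMap p).getD (2 * i + 1) d = (p (w.getD i dΓ)).getD 1 d := by
  induction w generalizing i with
  | nil => simp at hi
  | cons a t ih =>
    have hcons : (a :: t).flatMap p = p a ++ t.flatMap p := by simp
    cases i with
    | zero =>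
      have h0 : (0 : ℕ) < (p a).length := by rw [hp]; omega
      have h1 : (1 : ℕ) < (p a).length := by rw [hp]; omega
      simp only [Nat.mul_zero, Nat.zero_add]
      constructor
      · rw [hcons, List.getD_eq_getElem?_getD, List.getElem?_append_left h0]
        simp [List.getD_eq_getElem?_getD]
      · rw [hcons, List.getD_eq_getElem?_getD, List.getElem?_append_left h1]
        simp [List.getD_eq_getElem?_getD]
    | succ i =>
      have hi' : i < t.length := by simpa using hi
      have h2 : 2 * (i + 1) = (p a).length + 2 * i := by rw [hp]; ring
      have h3 : 2 * (i + 1) + 1 = (p a).length + (2 * i + 1) := by rw [hp]; ring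
      obtain ⟨ih1, ih2⟩ := ih i hi'
      constructor
      · rw [hcons, List.getD_eq_getElem?_getD, h2,
          List.getElem?_append_right (Nat.le_add_right _ _), Nat.add_sub_cancel_left,
          ← List.getD_eq_getElem?_getD, ih1]
        simp
      · rw [hcons, List.getD_eq_getElem?_getD, h3,
          List.getElem?_append_right (Nat.le_add_right _ _), Nat.add_sub_cancel_left,
          ← List.getD_eq_getElem?_getD, ih2]
        simp

-- The specific morphisms.
def ff : Fin 2 → List (Fin 2) := ![[0, 1], [0]]
def gg : Fin 3 → List (Fin 3) := ![[0, 1, 2, 2], [0, 1, 2, 2, 0], [0, 1, 2, 0]]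
def pp : Fin 3 → List (Fin 2) := ![[0, 1], [0, 0], [1, 0]]

lemma inter_letter : ∀ a : Fin 3, (gg a).flatMap pp = (applyW ff)^[3] (pp a) := by
  decide

lemma inter_word (w : List (Fin 3)) :
    (applyW gg w).flatMap pp = (applyW ff)^[3] (w.flatMap pp) := by
  induction w with
  | nil => simp [applyW]
  | cons a t ih =>
    have h1 : applyW gg (a :: t) = gg a ++ applyW gg t := rfl
    have h2 : (a :: t).flatMap pp = pp a ++ t.flatMap pp := by simp
    rw [h1, h2, List.flatMap_append, applyW_iter_append, ih, inter_letter]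

lemma key (m : ℕ) :
    ((applyW gg)^[m] [0]).flatMap pp = (applyW ff)^[3 * m + 1] [0] := by
  induction m with
  | zero => decide
  | succ m ih =>
    rw [Function.iterate_succ_apply', inter_word, ih, ← Function.iterate_add_apply]
    congr 1
    ring

lemma ff_one : ∀ b, 1 ≤ (ff b).length := by decide
lemma ff_two : 2 ≤ (ff 0).length := by decide
lemma ff_pre : [0] <+: ff 0 := ⟨[1], rfl⟩
lemma gg_one : ∀ b, 1 ≤ (gg b).length := by decide
lemma gg_two : 2 ≤ (gg 0).length := by decide
lemma gg_pre : [0] <+: gg 0 := ⟨[1, 2, 2], rfl⟩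

lemma main_both (i : ℕ) :
    fixpt ff 0 (2 * i) = (pp (fixpt gg 0 i)).getD 0 0 ∧
    fixpt ff 0 (2 * i + 1) = (pp (fixpt gg 0 i)).getD 1 0 := by
  have hwi : i < ((applyW gg)^[i + 1] [0] : List (Fin 3)).length := by
    have := iter_length gg 0 gg_one gg_two gg_pre (i + 1); omega
  have hpp : ∀ a, (pp a).length = 2 := by decide
  have hkey : ((applyW gg)^[i + 1] [0] : List (Fin 3)).flatMap pp
      = (applyW ff)^[3 * i + 4] [0] := by
    have h := key (i + 1)
    have e : 3 * (i + 1) + 1 = 3 * i + 4 := by ring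
    rw [e] at h
    exact h
  have hG : fixpt gg 0 i = ((applyW gg)^[i + 1] [0] : List (Fin 3)).getD i 0 := rfl
  obtain ⟨h1, h2⟩ := flatMap_two_getD pp hpp ((applyW gg)^[i + 1] [0]) i hwi 0 0
  constructor
  · rw [fixpt_eq_iter ff 0 ff_one ff_two ff_pre (m := 3 * i + 4) (by omega),
      ← hkey, h1, hG]
  · rw [fixpt_eq_iter ff 0 ff_one ff_two ff_pre (m := 3 * i + 4) (by omega),
      ← hkey, h2, hG]

end Aux18

/-- For `g(0)=0122, g(1)=01220, g(2)=0120`: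
`even(fib) = ρ(g^∞(0))` for `ρ(0)=ρ(1)=0, ρ(2)=1`, and
`odd(fib) = τ(g^∞(0))` for `τ(0)=1, τ(1)=τ(2)=0`, where `fib = f^∞(0)` for
`f(0)=01, f(1)=0`, `even(σ)(i)=σ(2i)` and `odd(σ)(i)=σ(2i+1)`. -/
theorem stmt_18 :
    (fun i : ℕ => fixpt (![[0, 1], [0]] : Fin 2 → List (Fin 2)) 0 (2 * i)) =
      applyC (![0, 0, 1] : Fin 3 → Fin 2)
        (fixpt (![[0, 1, 2, 2], [0, 1, 2, 2, 0], [0, 1, 2, 0]] :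
          Fin 3 → List (Fin 3)) 0) ∧
    (fun i : ℕ => fixpt (![[0, 1], [0]] : Fin 2 → List (Fin 2)) 0 (2 * i + 1)) =
      applyC (![1, 0, 0] : Fin 3 → Fin 2)
        (fixpt (![[0, 1, 2, 2], [0, 1, 2, 2, 0], [0, 1, 2, 0]] :
          Fin 3 → List (Fin 3)) 0) := by
  open Aux18 in
  have hrho : ∀ a : Fin 3, (pp a).getD 0 0 = (![0, 0, 1] : Fin 3 → Fin 2) a := by decide
  have htau : ∀ a : Fin 3, (pp a).getD 1 0 = (![1, 0, 0] : Fin 3 → Fin 2) a := by decide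
  constructor
  · funext i
    show fixpt Aux18.ff 0 (2 * i) = _
    rw [(Aux18.main_both i).1, hrho]
    rfl
  · funext i
    show fixpt Aux18.ff 0 (2 * i + 1) = _
    rw [(Aux18.main_both i).2, htau]
    rfl
end

section
/- Let f_e be the morphism on {0,1,2,3,4} with f_e(0) = 01, f_e(1) = 2, f_e(2) = 31, f_e(3) = 04, f_e(4) = 0, and let τ_e be the coding with τ_e(0) = τ_e(1) = 0, τ_e(2) = τ_e(3) = τ_e(4) = 1. Then even(fib) = τ_e(f_e^∞(0)). -/
set_option maxRecDepth 2000

namespace Stmt19Aux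

section Generic

variable {Γ : Type*} (g : Γ → List Γ) (a : Γ)

def W (n : ℕ) : List Γ := (applyW g)^[n] [a]

lemma W_succ (n : ℕ) : W g a (n + 1) = applyW g (W g a n) :=
  Function.iterate_succ_apply' _ _ _

lemma applyW_append (l₁ l₂ : List Γ) :
    applyW g (l₁ ++ l₂) = applyW g l₁ ++ applyW g l₂ :=
  List.flatMap_append

lemma applyW_cons (x : Γ) (l : List Γ) :
    applyW g (x :: l) = g x ++ applyW g l :=
  List.flatMap_cons

lemma applyW_singleton (x : Γ) : applyW g [x] = g x := by
  rw [applyW_cons]; simp [applyW]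

lemma applyW_len (hne : ∀ c, g c ≠ []) (w : List Γ) : w.length ≤ (applyW g w).length := by
  induction w with
  | nil => simp [applyW]
  | cons x w ih =>
      rw [applyW_cons, List.length_append, List.length_cons]
      have : 0 < (g x).length := List.length_pos_iff.mpr (hne x)
      omega

variable (u : List Γ)

lemma W_head_tail (hne : ∀ c, g c ≠ []) (ha : g a = a :: u) (hu : u ≠ []) : ∀ n, ∃ t : List Γ, W g a n = a :: t ∧ n ≤ t.length := by
  intro n
  induction n with
  | zero => exact ⟨[], rfl, Nat.zero_le _⟩
  | succ n ih =>
      obtain ⟨t, ht, hlen⟩ := ih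
      refine ⟨u ++ applyW g t, ?_, ?_⟩
      · rw [W_succ, ht, applyW_cons, ha]; simp
      · have h1 : 0 < u.length := List.length_pos_iff.mpr hu
        have h2 := applyW_len g hne t
        simp only [List.length_append]; omega

lemma W_len (hne : ∀ c, g c ≠ []) (ha : g a = a :: u) (hu : u ≠ []) (n : ℕ) : n + 1 ≤ (W g a n).length := by
  obtain ⟨t, ht, hlen⟩ := W_head_tail g a u hne ha hu n
  rw [ht]; simp; omega

lemma W_prefix_succ (ha : g a = a :: u) (n : ℕ) : ∃ t, W g a (n + 1) = W g a n ++ t := by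
  induction n with
  | zero =>
      refine ⟨u, ?_⟩
      show W g a 1 = [a] ++ u
      rw [W_succ]
      show applyW g [a] = [a] ++ u
      rw [applyW_singleton, ha]; rfl
  | succ n ih =>
      obtain ⟨t, ht⟩ := ih
      exact ⟨applyW g t, by rw [W_succ, ht, applyW_append, ← W_succ, ht]⟩

lemma W_prefix_le (ha : g a = a :: u) {n m : ℕ} (h : n ≤ m) : ∃ t, W g a m = W g a n ++ t := by
  induction m with
  | zero =>
      have : n = 0 := by omega
      exact ⟨[], by simp [this]⟩
  | succ m ih =>
      rcases Nat.lt_or_ge n (m + 1) with h' | h'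
      · obtain ⟨t, ht⟩ := ih (by omega)
        obtain ⟨t', ht'⟩ := W_prefix_succ g a u ha m
        exact ⟨t ++ t', by rw [ht', ht, List.append_assoc]⟩
      · have : n = m + 1 := by omega
        exact ⟨[], by simp [this]⟩

/-- the fixed point letter agrees with any sufficiently long iterate -/
lemma fixpt_eq_W (hne : ∀ c, g c ≠ []) (ha : g a = a :: u) (hu : u ≠ []) {m n : ℕ} (h : n < (W g a m).length) :
    fixpt g a n = (W g a m).getD n a := by
  have base : fixpt g a n = (W g a (n + 1)).getD n a := rfl
  have hlen : n < (W g a (n + 1)).length := by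
    have := W_len g a u hne ha hu (n + 1); omega
  rcases le_total (n + 1) m with hle | hle
  · obtain ⟨t, ht⟩ := W_prefix_le g a u ha hle
    rw [base, ht, List.getD_append _ _ _ _ hlen]
  · obtain ⟨t, ht⟩ := W_prefix_le g a u ha hle
    rw [base, ht, List.getD_append _ _ _ _ h]

lemma W_eq_map (hne : ∀ c, g c ≠ []) (ha : g a = a :: u) (hu : u ≠ []) (m : ℕ) :
    W g a m = (List.range (W g a m).length).map (fixpt g a) := by
  apply List.ext_getElem (by simp)
  intro n h₁ h₂
  rw [List.getElem_map, List.getElem_range]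
  rw [fixpt_eq_W g a u hne ha hu h₁, List.getD_eq_getElem _ _ h₁]

/-- cumulative block lengths -/
def Tg : ℕ → ℕ
  | 0 => 0
  | n + 1 => Tg n + (g (fixpt g a n)).length

lemma Tg_succ (n : ℕ) : Tg g a (n + 1) = Tg g a n + (g (fixpt g a n)).length := rfl

lemma Tg_ge (hne : ∀ c, g c ≠ []) (j : ℕ) : j ≤ Tg g a j := by
  induction j with
  | zero => simp [Tg]
  | succ j ih =>
      have : 0 < (g (fixpt g a j)).length := List.length_pos_iff.mpr (hne _)
      rw [Tg_succ]; omega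

lemma applyW_map_range_len (j : ℕ) :
    (applyW g ((List.range j).map (fixpt g a))).length = Tg g a j := by
  induction j with
  | zero => simp [applyW, Tg]
  | succ j ih =>
      rw [List.range_succ, List.map_append, applyW_append, List.length_append, ih]
      simp [applyW_singleton, Tg_succ]

/-- the key block-structure lemma: the fixed point decomposes into blocks
`g (σ j)` starting at positions `Tg j`. -/
lemma block (hne : ∀ c, g c ≠ []) (ha : g a = a :: u) (hu : u ≠ []) (j r : ℕ)
    (hr : r < (g (fixpt g a j)).length) :
    fixpt g a (Tg g a j + r) = (g (fixpt g a j)).getD r a := by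
  set m := Tg g a j + r + j + 1 with hm
  have hjm : j < (W g a m).length := by
    have h1 := W_len g a u hne ha hu m
    have h2 := Tg_ge g a hne j
    omega
  have hrange : List.range (W g a m).length =
      List.range j ++ [j] ++ (List.range (W g a m).length).drop (j + 1) := by
    rw [← List.range_succ]
    conv_lhs => rw [← List.take_append_drop (j + 1) (List.range (W g a m).length)]
    rw [List.take_range, min_eq_left (by omega)]
  have hWm : W g a m = ((List.range j).map (fixpt g a) ++ [fixpt g a j]) ++
      ((List.range (W g a m).length).drop (j + 1)).map (fixpt g a) := by
    conv_lhs => rw [W_eq_map g a u hne ha hu m]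
    conv_lhs => rw [hrange]
    simp [List.map_append]
  have hsplit : W g a (m + 1) =
      applyW g ((List.range j).map (fixpt g a)) ++
        (g (fixpt g a j) ++
          applyW g (((List.range (W g a m).length).drop (j + 1)).map (fixpt g a))) := by
    rw [W_succ]
    conv_lhs => rw [hWm]
    rw [applyW_append, applyW_append, applyW_singleton, List.append_assoc]
  have hA : (applyW g ((List.range j).map (fixpt g a))).length = Tg g a j :=
    applyW_map_range_len g a j
  have hpos : Tg g a j + r < (W g a (m + 1)).length := by
    rw [hsplit]
    simp only [List.length_append, hA]
    omega
  rw [fixpt_eq_W g a u hne ha hu hpos, hsplit]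
  rw [List.getD_append_right _ _ _ _ (by omega)]
  rw [hA, Nat.add_sub_cancel_left]
  rw [List.getD_append _ _ _ _ hr]

lemma block2 (hne : ∀ c, g c ≠ []) (ha : g a = a :: u) (hu : u ≠ []) (m q : ℕ)
    (h : q < (g (fixpt g a m)).length + (g (fixpt g a (m + 1))).length) :
    fixpt g a (Tg g a m + q) =
      (g (fixpt g a m) ++ g (fixpt g a (m + 1))).getD q a := by
  by_cases h1 : q < (g (fixpt g a m)).length
  · rw [List.getD_append _ _ _ _ h1]
    exact block g a u hne ha hu m q h1
  · push_neg at h1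
    rw [List.getD_append_right _ _ _ _ h1]
    have hq : Tg g a m + q = Tg g a (m + 1) + (q - (g (fixpt g a m)).length) := by
      rw [Tg_succ]; omega
    rw [hq]
    exact block g a u hne ha hu (m + 1) _ (by omega)

lemma block4 (hne : ∀ c, g c ≠ []) (ha : g a = a :: u) (hu : u ≠ []) (m q : ℕ)
    (h : q < (g (fixpt g a m)).length + (g (fixpt g a (m + 1))).length +
      (g (fixpt g a (m + 2))).length + (g (fixpt g a (m + 3))).length) :
    fixpt g a (Tg g a m + q) =
      ((g (fixpt g a m) ++ g (fixpt g a (m + 1))) ++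
        (g (fixpt g a (m + 2)) ++ g (fixpt g a (m + 3)))).getD q a := by
  by_cases h1 : q < (g (fixpt g a m)).length + (g (fixpt g a (m + 1))).length
  · rw [List.getD_append _ _ _ _ (by simpa using h1)]
    exact block2 g a u hne ha hu m q h1
  · push_neg at h1
    rw [List.getD_append_right _ _ _ _ (by simpa using h1)]
    have hq : Tg g a m + q = Tg g a (m + 2) +
        (q - ((g (fixpt g a m)).length + (g (fixpt g a (m + 1))).length)) := by
      rw [Tg_succ, Tg_succ]; omega
    rw [hq]
    have h3 : m + 2 + 1 = m + 3 := by omega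
    have := block2 g a u hne ha hu (m + 2)
      (q - ((g (fixpt g a m)).length + (g (fixpt g a (m + 1))).length))
      (by rw [h3]; omega)
    rw [h3] at this
    simpa using this

lemma cover (hne : ∀ c, g c ≠ []) (i : ℕ) : ∃ j r, i = Tg g a j + r ∧ r < (g (fixpt g a j)).length := by
  induction i with
  | zero =>
      exact ⟨0, 0, by simp [Tg], List.length_pos_iff.mpr (hne _)⟩
  | succ i ih =>
      obtain ⟨j, r, hi, hr⟩ := ih
      by_cases h : r + 1 < (g (fixpt g a j)).length
      · exact ⟨j, r + 1, by omega, h⟩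
      · refine ⟨j + 1, 0, ?_, List.length_pos_iff.mpr (hne _)⟩
        rw [Tg_succ]; omega

end Generic

section Projection

variable {Γ Δ : Type*} (g : Γ → List Γ) (g' : Δ → List Δ) (π : Γ → Δ) (a : Γ)
lemma map_applyW (hcomm : ∀ c, (g c).map π = g' (π c)) (w : List Γ) :
    (applyW g w).map π = applyW g' (w.map π) := by
  induction w with
  | nil => simp [applyW]
  | cons x w ih =>
      rw [applyW_cons, List.map_append, ih, List.map_cons, applyW_cons, hcomm]

lemma map_W (hcomm : ∀ c, (g c).map π = g' (π c)) (n : ℕ) : (W g a n).map π = W g' (π a) n := by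
  induction n with
  | zero => rfl
  | succ n ih => rw [W_succ, map_applyW g g' π hcomm, ih, W_succ]

lemma fixpt_proj (hcomm : ∀ c, (g c).map π = g' (π c)) (hne : ∀ c, g c ≠ []) (u : List Γ) (ha : g a = a :: u) (hu : u ≠ []) (n : ℕ) : fixpt g' (π a) n = π (fixpt g a n) := by
  have hlen : n < (W g a (n + 1)).length := by
    have := W_len g a u hne ha hu (n + 1); omega
  have hlen' : n < (W g' (π a) (n + 1)).length := by
    rw [← map_W g g' π a hcomm, List.length_map]; exact hlen
  have base : fixpt g' (π a) n = (W g' (π a) (n + 1)).getD n (π a) := rfl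
  rw [base, ← map_W g g' π a hcomm,
    List.getD_eq_getElem _ _ (by simpa using hlen), List.getElem_map,
    fixpt_eq_W g a u hne ha hu hlen, List.getD_eq_getElem _ _ hlen]

end Projection

/-! ### The concrete morphisms -/

def g5 : Fin 5 → List (Fin 5) := ![[0, 1], [2], [3, 1], [0, 4], [0]]
def f2 : Fin 2 → List (Fin 2) := ![[0, 1], [0]]
def pi5 : Fin 5 → Fin 2 := ![0, 1, 0, 0, 1]
def tau5 : Fin 5 → Fin 2 := ![0, 0, 1, 1, 1]

def sig : ℕ → Fin 5 := fixpt g5 0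
def len (c : Fin 5) : ℕ := (g5 c).length
noncomputable def Tf : ℕ → ℕ := Tg g5 0
def al (c : Fin 5) : ℕ := if c = 1 then 1 else 0
def ar (c : Fin 5) : ℕ := if c = 2 then 1 else 0

lemma hne5 : ∀ c, g5 c ≠ [] := by decide
lemma ha5 : g5 0 = 0 :: [1] := by decide
lemma hu5 : ([1] : List (Fin 5)) ≠ [] := by decide

def S : List (Fin 5 × Fin 5 × Fin 5 × Fin 5 × Fin 5 × Fin 5) :=
  [(0, 1, 0, 3, 1, 0), (0, 1, 1, 0, 1, 2), (0, 1, 1, 0, 4, 2), (0, 1, 2, 0, 1, 0),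
   (0, 1, 2, 0, 1, 2), (0, 1, 2, 3, 1, 0), (0, 3, 1, 2, 0, 1), (0, 3, 4, 2, 0, 1),
   (0, 4, 1, 0, 3, 1), (0, 4, 1, 2, 0, 1), (0, 4, 1, 2, 3, 1), (1, 0, 0, 3, 1, 0),
   (1, 0, 1, 0, 1, 2), (1, 0, 1, 0, 4, 2), (1, 0, 2, 0, 1, 0), (1, 0, 2, 0, 1, 2),
   (1, 0, 2, 3, 1, 0), (1, 2, 1, 0, 3, 1), (1, 2, 1, 2, 0, 1), (1, 2, 1, 2, 3, 1),
   (1, 2, 4, 2, 0, 1), (2, 0, 0, 1, 0, 3), (2, 0, 0, 1, 2, 0), (2, 0, 0, 1, 2, 3),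
   (2, 0, 0, 4, 2, 0), (2, 3, 0, 1, 0, 4), (2, 3, 3, 1, 0, 1), (2, 3, 3, 1, 0, 4),
   (3, 1, 0, 1, 0, 3), (3, 1, 0, 1, 2, 0), (3, 1, 0, 1, 2, 3), (3, 1, 0, 4, 2, 0),
   (4, 2, 0, 1, 0, 4), (4, 2, 3, 1, 0, 1), (4, 2, 3, 1, 0, 4)]

set_option synthInstance.maxHeartbeats 400000 in
set_option synthInstance.maxSize 1000 in
lemma fact1 : ∀ p ∈ S, ∀ r < len p.1,
    (ar p.1 + 1 ≤ len p.2.2.1 + al p.1 + 2 * r) ∧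
    (len p.2.2.1 + al p.1 + 2 * r + 3 - ar p.1 - 1 <
      len p.2.2.1 + len p.2.2.2.1 + len p.2.2.2.2.1 + len p.2.2.2.2.2) ∧
    (((g5 p.1).getD r 0,
      (g5 p.1 ++ g5 p.2.1).getD (r + 1) 0,
      ((g5 p.2.2.1 ++ g5 p.2.2.2.1) ++ (g5 p.2.2.2.2.1 ++ g5 p.2.2.2.2.2)).getD
        (len p.2.2.1 + al p.1 + 2 * r + 0 - ar p.1 - 1) 0,
      ((g5 p.2.2.1 ++ g5 p.2.2.2.1) ++ (g5 p.2.2.2.2.1 ++ g5 p.2.2.2.2.2)).getD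
        (len p.2.2.1 + al p.1 + 2 * r + 1 - ar p.1 - 1) 0,
      ((g5 p.2.2.1 ++ g5 p.2.2.2.1) ++ (g5 p.2.2.2.2.1 ++ g5 p.2.2.2.2.2)).getD
        (len p.2.2.1 + al p.1 + 2 * r + 2 - ar p.1 - 1) 0,
      ((g5 p.2.2.1 ++ g5 p.2.2.2.1) ++ (g5 p.2.2.2.2.1 ++ g5 p.2.2.2.2.2)).getD
        (len p.2.2.1 + al p.1 + 2 * r + 3 - ar p.1 - 1) 0) ∈ S) := by
  intro p hp
  fin_cases hp <;> decide

lemma fact2 : ∀ p ∈ S,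
    al p.2.1 + ar p.1 + len p.2.2.2.1 + len p.2.2.2.2.1 =
      ar p.2.1 + al p.1 + 2 * len p.1 := by
  intro p hp
  fin_cases hp <;> decide

lemma fact3 : ∀ p ∈ S, tau5 p.1 = pi5 p.2.2.2.1 := by
  intro p hp
  fin_cases hp <;> decide


lemma len_pos (c : Fin 5) : 1 ≤ len c := by fin_cases c <;> decide

lemma sig_block (j r : ℕ) (hr : r < len (sig j)) :
    sig (Tf j + r) = (g5 (sig j)).getD r 0 :=
  block g5 0 [1] hne5 ha5 hu5 j r hr

lemma sig_block2 (m q : ℕ) (h : q < len (sig m) + len (sig (m + 1))) :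
    sig (Tf m + q) = (g5 (sig m) ++ g5 (sig (m + 1))).getD q 0 :=
  block2 g5 0 [1] hne5 ha5 hu5 m q h

lemma sig_block4 (m q : ℕ)
    (h : q < len (sig m) + len (sig (m + 1)) + len (sig (m + 2)) + len (sig (m + 3))) :
    sig (Tf m + q) = ((g5 (sig m) ++ g5 (sig (m + 1))) ++
      (g5 (sig (m + 2)) ++ g5 (sig (m + 3)))).getD q 0 :=
  block4 g5 0 [1] hne5 ha5 hu5 m q h

lemma Tf_succ (n : ℕ) : Tf (n + 1) = Tf n + len (sig n) := rfl

lemma Tf_ge1 : ∀ j, 1 ≤ j → j + 1 ≤ Tf j := by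
  intro j hj
  induction j with
  | zero => omega
  | succ j ih =>
      rcases Nat.eq_zero_or_pos j with h | h
      · subst h
        show 2 ≤ Tf 1
        have : Tf 1 = Tf 0 + len (sig 0) := Tf_succ 0
        have h0 : len (sig 0) = 2 := by decide
        have hT0 : Tf 0 = 0 := rfl
        omega
      · have := ih h
        have h1 := len_pos (sig j)
        have h2 : Tf (j + 1) = Tf j + len (sig j) := Tf_succ j
        omega

lemma master : ∀ k : ℕ,
    ((sig (k + 1), sig (k + 2), sig (2 * k + 1), sig (2 * k + 2),
      sig (2 * k + 3), sig (2 * k + 4)) ∈ S) ∧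
    (Tf (2 * k + 2) + al (sig (k + 1)) = 2 * Tf (k + 1) + ar (sig (k + 1))) := by
  intro k
  induction k using Nat.strong_induction_on with
  | _ k IH =>
  rcases k with _ | k''
  · constructor
    · show (sig 1, sig 2, sig 1, sig 2, sig 3, sig 4) ∈ S
      decide
    · show Tf 2 + al (sig 1) = 2 * Tf 1 + ar (sig 1)
      decide
  · -- k = k'' + 1, so the position of interest is j = k'' + 2 ≥ 2
    have memK := (IH k'' (by omega)).1
    have alignK := (IH k'' (by omega)).2
    constructor
    · -- membership part, via desubstitution
      show (sig (k'' + 2), sig (k'' + 3), sig (2 * k'' + 3), sig (2 * k'' + 4),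
        sig (2 * k'' + 5), sig (2 * k'' + 6)) ∈ S
      obtain ⟨j', r, hcov, hr⟩ := cover g5 0 hne5 (k'' + 2)
      rcases j' with _ | k'
      · exfalso
        have h0 : len (sig 0) = 2 := by decide
        have hT0 : Tf 0 = 0 := rfl
        have hr' : r < len (sig 0) := hr
        have hcov' : k'' + 2 = Tf 0 + r := hcov
        omega
      · have hr' : r < len (sig (k' + 1)) := hr
        have hcov' : k'' + 2 = Tf (k' + 1) + r := hcov
        have hk' : k' < k'' + 1 := by
          have := Tf_ge1 (k' + 1) (by omega)
          omega
        have memK' := (IH k' hk').1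
        have alignK' := (IH k' hk').2
        have hf1 :
            (ar (sig (k' + 1)) + 1 ≤ len (sig (2 * k' + 1)) + al (sig (k' + 1)) + 2 * r) ∧
            (len (sig (2 * k' + 1)) + al (sig (k' + 1)) + 2 * r + 3 - ar (sig (k' + 1)) - 1 <
              len (sig (2 * k' + 1)) + len (sig (2 * k' + 2)) + len (sig (2 * k' + 3)) +
                len (sig (2 * k' + 4))) ∧
            (((g5 (sig (k' + 1))).getD r 0,
              (g5 (sig (k' + 1)) ++ g5 (sig (k' + 2))).getD (r + 1) 0,
              ((g5 (sig (2 * k' + 1)) ++ g5 (sig (2 * k' + 2))) ++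
                (g5 (sig (2 * k' + 3)) ++ g5 (sig (2 * k' + 4)))).getD
                (len (sig (2 * k' + 1)) + al (sig (k' + 1)) + 2 * r + 0 - ar (sig (k' + 1)) - 1) 0,
              ((g5 (sig (2 * k' + 1)) ++ g5 (sig (2 * k' + 2))) ++
                (g5 (sig (2 * k' + 3)) ++ g5 (sig (2 * k' + 4)))).getD
                (len (sig (2 * k' + 1)) + al (sig (k' + 1)) + 2 * r + 1 - ar (sig (k' + 1)) - 1) 0,
              ((g5 (sig (2 * k' + 1)) ++ g5 (sig (2 * k' + 2))) ++
                (g5 (sig (2 * k' + 3)) ++ g5 (sig (2 * k' + 4)))).getD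
                (len (sig (2 * k' + 1)) + al (sig (k' + 1)) + 2 * r + 2 - ar (sig (k' + 1)) - 1) 0,
              ((g5 (sig (2 * k' + 1)) ++ g5 (sig (2 * k' + 2))) ++
                (g5 (sig (2 * k' + 3)) ++ g5 (sig (2 * k' + 4)))).getD
                (len (sig (2 * k' + 1)) + al (sig (k' + 1)) + 2 * r + 3 - ar (sig (k' + 1)) - 1) 0) ∈ S) :=
          fact1 _ memK' r hr'
        obtain ⟨hb1, hb2, hmemN⟩ := hf1
        have tq : Tf (2 * k' + 2) = Tf (2 * k' + 1) + len (sig (2 * k' + 1)) :=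
          Tf_succ (2 * k' + 1)
        have E1 : sig (k'' + 2) = (g5 (sig (k' + 1))).getD r 0 := by
          rw [hcov']; exact sig_block (k' + 1) r hr'
        have E2 : sig (k'' + 3) = (g5 (sig (k' + 1)) ++ g5 (sig (k' + 2))).getD (r + 1) 0 := by
          have hp : k'' + 3 = Tf (k' + 1) + (r + 1) := by omega
          rw [hp]
          exact sig_block2 (k' + 1) (r + 1)
            (by show r + 1 < len (sig (k' + 1)) + len (sig (k' + 2))
                have := len_pos (sig (k' + 2)); omega)
        have E3 : sig (2 * k'' + 3) =
            ((g5 (sig (2 * k' + 1)) ++ g5 (sig (2 * k' + 2))) ++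
              (g5 (sig (2 * k' + 3)) ++ g5 (sig (2 * k' + 4)))).getD
              (len (sig (2 * k' + 1)) + al (sig (k' + 1)) + 2 * r + 0 - ar (sig (k' + 1)) - 1) 0 := by
          have hp : 2 * k'' + 3 = Tf (2 * k' + 1) +
              (len (sig (2 * k' + 1)) + al (sig (k' + 1)) + 2 * r + 0 - ar (sig (k' + 1)) - 1) := by
            omega
          rw [hp]
          exact sig_block4 (2 * k' + 1) _
            (by show _ < len (sig (2 * k' + 1)) + len (sig (2 * k' + 2)) +
                  len (sig (2 * k' + 3)) + len (sig (2 * k' + 4))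
                omega)
        have E4 : sig (2 * k'' + 4) =
            ((g5 (sig (2 * k' + 1)) ++ g5 (sig (2 * k' + 2))) ++
              (g5 (sig (2 * k' + 3)) ++ g5 (sig (2 * k' + 4)))).getD
              (len (sig (2 * k' + 1)) + al (sig (k' + 1)) + 2 * r + 1 - ar (sig (k' + 1)) - 1) 0 := by
          have hp : 2 * k'' + 4 = Tf (2 * k' + 1) +
              (len (sig (2 * k' + 1)) + al (sig (k' + 1)) + 2 * r + 1 - ar (sig (k' + 1)) - 1) := by
            omega
          rw [hp]
          exact sig_block4 (2 * k' + 1) _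
            (by show _ < len (sig (2 * k' + 1)) + len (sig (2 * k' + 2)) +
                  len (sig (2 * k' + 3)) + len (sig (2 * k' + 4))
                omega)
        have E5 : sig (2 * k'' + 5) =
            ((g5 (sig (2 * k' + 1)) ++ g5 (sig (2 * k' + 2))) ++
              (g5 (sig (2 * k' + 3)) ++ g5 (sig (2 * k' + 4)))).getD
              (len (sig (2 * k' + 1)) + al (sig (k' + 1)) + 2 * r + 2 - ar (sig (k' + 1)) - 1) 0 := by
          have hp : 2 * k'' + 5 = Tf (2 * k' + 1) +
              (len (sig (2 * k' + 1)) + al (sig (k' + 1)) + 2 * r + 2 - ar (sig (k' + 1)) - 1) := by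
            omega
          rw [hp]
          exact sig_block4 (2 * k' + 1) _
            (by show _ < len (sig (2 * k' + 1)) + len (sig (2 * k' + 2)) +
                  len (sig (2 * k' + 3)) + len (sig (2 * k' + 4))
                omega)
        have E6 : sig (2 * k'' + 6) =
            ((g5 (sig (2 * k' + 1)) ++ g5 (sig (2 * k' + 2))) ++
              (g5 (sig (2 * k' + 3)) ++ g5 (sig (2 * k' + 4)))).getD
              (len (sig (2 * k' + 1)) + al (sig (k' + 1)) + 2 * r + 3 - ar (sig (k' + 1)) - 1) 0 := by
          have hp : 2 * k'' + 6 = Tf (2 * k' + 1) +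
              (len (sig (2 * k' + 1)) + al (sig (k' + 1)) + 2 * r + 3 - ar (sig (k' + 1)) - 1) := by
            omega
          rw [hp]
          exact sig_block4 (2 * k' + 1) _
            (by show _ < len (sig (2 * k' + 1)) + len (sig (2 * k' + 2)) +
                  len (sig (2 * k' + 3)) + len (sig (2 * k' + 4))
                omega)
        rw [E1, E2, E3, E4, E5, E6]
        exact hmemN
    · -- alignment part, sequential from index k'' + 1
      show Tf (2 * k'' + 4) + al (sig (k'' + 2)) = 2 * Tf (k'' + 2) + ar (sig (k'' + 2))
      have f2' : al (sig (k'' + 2)) + ar (sig (k'' + 1)) + len (sig (2 * k'' + 2)) +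
          len (sig (2 * k'' + 3)) =
          ar (sig (k'' + 2)) + al (sig (k'' + 1)) + 2 * len (sig (k'' + 1)) :=
        fact2 _ memK
      have t0 : Tf (k'' + 2) = Tf (k'' + 1) + len (sig (k'' + 1)) := Tf_succ (k'' + 1)
      have t1 : Tf (2 * k'' + 3) = Tf (2 * k'' + 2) + len (sig (2 * k'' + 2)) :=
        Tf_succ (2 * k'' + 2)
      have t2 : Tf (2 * k'' + 4) = Tf (2 * k'' + 3) + len (sig (2 * k'' + 3)) :=
        Tf_succ (2 * k'' + 3)
      omega

lemma final (i : ℕ) : pi5 (sig (2 * i)) = tau5 (sig i) := by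
  cases i with
  | zero => decide
  | succ k =>
      have hm := (master k).1
      have h3 : tau5 (sig (k + 1)) = pi5 (sig (2 * k + 2)) := fact3 _ hm
      show pi5 (sig (2 * k + 2)) = tau5 (sig (k + 1))
      exact h3.symm

end Stmt19Aux

/-- `even(fib) = τ_e(f_e^∞(0))` for `f_e(0)=01, f_e(1)=2, f_e(2)=31,
f_e(3)=04, f_e(4)=0` and `τ_e(0)=τ_e(1)=0, τ_e(2)=τ_e(3)=τ_e(4)=1`, where
`fib = f^∞(0)` for `f(0)=01, f(1)=0` and `even(σ)(i)=σ(2i)`. -/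
theorem stmt_19 :
    (fun i : ℕ => fixpt (![[0, 1], [0]] : Fin 2 → List (Fin 2)) 0 (2 * i)) =
      applyC (![0, 0, 1, 1, 1] : Fin 5 → Fin 2)
        (fixpt (![[0, 1], [2], [3, 1], [0, 4], [0]] :
          Fin 5 → List (Fin 5)) 0) := by
  funext i
  show fixpt Stmt19Aux.f2 0 (2 * i) = Stmt19Aux.tau5 (Stmt19Aux.sig i)
  have hproj : fixpt Stmt19Aux.f2 0 (2 * i) = Stmt19Aux.pi5 (Stmt19Aux.sig (2 * i)) :=
    Stmt19Aux.fixpt_proj Stmt19Aux.g5 Stmt19Aux.f2 Stmt19Aux.pi5 (0 : Fin 5)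
      (by decide) Stmt19Aux.hne5 [1] Stmt19Aux.ha5 Stmt19Aux.hu5 (2 * i)
  rw [hproj]
  exact Stmt19Aux.final i
end
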